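/- arXiv:2408.13346 — 4 statements merged into one kernel-verified Lean document; each statement's English description precedes it below -/
import Mathlib

section
/- For every set A of positive integers and every integer n > 0, the sum of the second elementary symmetric polynomial over partitions of n with parts in A satisfies e_2p_A(n) = (1/2) ( n^2 * p(n|A) - Σ_{k=1}^{n} σ_{2,A}(k) * p(n-k|A) ). -/
open Finset

/-- The finset of partitions of `n` all of whose parts lie in `A`. -/
def partitionsIn (A : Set ℕ) [DecidablePred (· ∈ A)] (n : ℕ) : Finset (Nat.Partition n) :=
  Finset.univ.filter fun π => ∀ i ∈ π.parts, i ∈ A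

/-- `p(n|A)`, the number of partitions of `n` with parts in `A`. -/
def pIn (A : Set ℕ) [DecidablePred (· ∈ A)] (n : ℕ) : ℕ := (partitionsIn A n).card

/-- `e_j p_A(n)`, the sum of the `j`-th elementary symmetric polynomial evaluated at the
parts over all partitions of `n` with parts in `A`. -/
def ejpIn (A : Set ℕ) [DecidablePred (· ∈ A)] (j n : ℕ) : ℕ :=
  ∑ π ∈ partitionsIn A n, π.parts.esymm j

/-- `σ_{j,A}(n)`, the sum of `d^j` over the divisors `d` of `n` lying in `A`. -/
def sigmaIn (A : Set ℕ) [DecidablePred (· ∈ A)] (j n : ℕ) : ℕ :=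
  ∑ d ∈ n.divisors.filter (· ∈ A), d ^ j


lemma esymm_two_eq (s : Multiset ℕ) :
    2 * s.esymm 2 + (s.map (· ^ 2)).sum = s.sum ^ 2 := by
  induction s using Multiset.induction with
  | empty => simp [Multiset.esymm, Multiset.powersetCard_zero_right 1]
  | cons a s ih =>
    have h2 : (a ::ₘ s).esymm 2 = s.esymm 2 + a * s.sum := by
      rw [Multiset.esymm, Multiset.powersetCard_cons]
      rw [Multiset.map_add, Multiset.sum_add]
      rw [Multiset.powersetCard_one]
      rw [Multiset.map_map, Multiset.map_map]
      simp only [Function.comp]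
      rw [show Multiset.map (fun x => (a ::ₘ {x}).prod) s = Multiset.map (fun x => a * x) s from
        Multiset.map_congr rfl (by intro x _; simp [Multiset.prod_cons])]
      rw [Multiset.sum_map_mul_left]
      simp [Multiset.esymm]
    rw [h2, Multiset.map_cons, Multiset.sum_cons, Multiset.sum_cons]
    ring_nf
    ring_nf at ih
    omega


def subPartition {n : ℕ} (π : Nat.Partition n) (j a : ℕ)
    (h : Multiset.replicate j a ≤ π.parts) : Nat.Partition (n - j * a) where
  parts := π.parts - Multiset.replicate j a
  parts_pos hi := π.parts_pos (Multiset.mem_of_le tsub_le_self hi)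
  parts_sum := by
    have heq := tsub_add_cancel_of_le h
    have hs := congrArg Multiset.sum heq
    rw [Multiset.sum_add, Multiset.sum_replicate, smul_eq_mul, π.parts_sum] at hs
    omega

def addPartition {m : ℕ} (μ : Nat.Partition m) (j a : ℕ) (hapos : 0 < a) :
    Nat.Partition (m + j * a) where
  parts := μ.parts + Multiset.replicate j a
  parts_pos hi := by
    rcases Multiset.mem_add.mp hi with h | h
    · exact μ.parts_pos h
    · rw [Multiset.eq_of_mem_replicate h]; exact hapos
  parts_sum := by
    rw [Multiset.sum_add, Multiset.sum_replicate, smul_eq_mul, μ.parts_sum]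

lemma card_filter_count (A : Set ℕ) [DecidablePred (· ∈ A)] {a : ℕ} (ha : a ∈ A)
    (hapos : 0 < a) {j n : ℕ} (hj : j * a ≤ n) :
    ((partitionsIn A n).filter (fun π => j ≤ π.parts.count a)).card = pIn A (n - j * a) := by
  rw [pIn]
  apply Finset.card_bij (fun π hπ => subPartition π j a
    (Multiset.le_count_iff_replicate_le.mp (Finset.mem_filter.mp hπ).2))
  · intro π hπ
    have hπ' := Finset.mem_filter.mp hπ
    simp only [partitionsIn, Finset.mem_filter, Finset.mem_univ, true_and] at hπ' ⊢
    intro i hi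
    exact hπ'.1 i (Multiset.mem_of_le tsub_le_self hi)
  · intro π hπ σ hσ h
    have hleπ : Multiset.replicate j a ≤ π.parts :=
      Multiset.le_count_iff_replicate_le.mp (Finset.mem_filter.mp hπ).2
    have hleσ : Multiset.replicate j a ≤ σ.parts :=
      Multiset.le_count_iff_replicate_le.mp (Finset.mem_filter.mp hσ).2
    have hparts := congrArg Nat.Partition.parts h
    simp only [subPartition] at hparts
    ext1
    calc π.parts = π.parts - Multiset.replicate j a + Multiset.replicate j a :=
          (tsub_add_cancel_of_le hleπ).symm
      _ = σ.parts - Multiset.replicate j a + Multiset.replicate j a := by rw [hparts]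
      _ = σ.parts := tsub_add_cancel_of_le hleσ
  · intro μ hμ
    simp only [partitionsIn, Finset.mem_filter, Finset.mem_univ, true_and] at hμ
    refine ⟨⟨μ.parts + Multiset.replicate j a, ?_, ?_⟩, ?_, ?_⟩
    · intro i hi
      rcases Multiset.mem_add.mp hi with h | h
      · exact μ.parts_pos h
      · rw [Multiset.eq_of_mem_replicate h]; exact hapos
    · rw [Multiset.sum_add, Multiset.sum_replicate, smul_eq_mul, μ.parts_sum]
      omega
    · simp only [partitionsIn, Finset.mem_filter, Finset.mem_univ, true_and]
      refine ⟨fun i hi => ?_, ?_⟩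
      · rcases Multiset.mem_add.mp hi with h | h
        · exact hμ i h
        · rw [Multiset.eq_of_mem_replicate h]; exact ha
      · simp [Multiset.count_replicate]
    · ext1
      simp [subPartition]

lemma sq_sum_eq (A : Set ℕ) [DecidablePred (· ∈ A)] {n : ℕ} {π : Nat.Partition n}
    (hπ : π ∈ partitionsIn A n) :
    (π.parts.map (· ^ 2)).sum =
      ∑ a ∈ (Finset.Icc 1 n).filter (· ∈ A), π.parts.count a * a ^ 2 := by
  simp only [partitionsIn, Finset.mem_filter, Finset.mem_univ, true_and] at hπ
  rw [Finset.sum_multiset_map_count]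
  apply Finset.sum_subset
  · intro a haf
    rw [Multiset.mem_toFinset] at haf
    have h1 : 0 < a := π.parts_pos haf
    have h2 : a ≤ n := by
      rw [← π.parts_sum]
      exact Multiset.single_le_sum (fun x _ => Nat.zero_le x) a haf
    simp only [Finset.mem_filter, Finset.mem_Icc]
    exact ⟨⟨h1, h2⟩, hπ a haf⟩
  · intro a _ haf
    rw [Multiset.mem_toFinset] at haf
    rw [Multiset.count_eq_zero_of_notMem haf]
    simp

lemma sum_count_eq (A : Set ℕ) [DecidablePred (· ∈ A)] {a : ℕ} (ha : a ∈ A)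
    (hapos : 0 < a) (n : ℕ) :
    ∑ π ∈ partitionsIn A n, π.parts.count a =
      ∑ j ∈ Finset.Icc 1 (n / a), pIn A (n - j * a) := by
  have key : ∀ π ∈ partitionsIn A n, π.parts.count a =
      ∑ j ∈ Finset.Icc 1 (n / a), (if j ≤ π.parts.count a then 1 else 0) := by
    intro π _
    have hc : π.parts.count a ≤ n / a := by
      have hrep : Multiset.replicate (π.parts.count a) a ≤ π.parts :=
        Multiset.le_count_iff_replicate_le.mp le_rfl
      obtain ⟨u, hu⟩ := Multiset.le_iff_exists_add.mp hrep
      have hsum : (Multiset.replicate (π.parts.count a) a).sum + u.sum = n := by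
        rw [← Multiset.sum_add, ← hu, π.parts_sum]
      rw [Multiset.sum_replicate, smul_eq_mul] at hsum
      exact Nat.le_div_iff_mul_le hapos |>.mpr (by omega)
    rw [← Finset.sum_filter]
    have : (Finset.Icc 1 (n / a)).filter (· ≤ π.parts.count a)
        = Finset.Icc 1 (π.parts.count a) := by
      ext j; simp only [Finset.mem_filter, Finset.mem_Icc]; omega
    rw [this]
    simp
  rw [Finset.sum_congr rfl key, Finset.sum_comm]
  apply Finset.sum_congr rfl
  intro j hj
  rw [Finset.mem_Icc] at hj
  have hja : j * a ≤ n := by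
    calc j * a ≤ (n / a) * a := Nat.mul_le_mul_right a hj.2
      _ ≤ n := Nat.div_mul_le_self n a
  rw [← Finset.card_filter, card_filter_count A ha hapos hja]

lemma conv_eq (A : Set ℕ) [DecidablePred (· ∈ A)] (hA : ∀ a ∈ A, 0 < a) (n : ℕ) :
    ∑ π ∈ partitionsIn A n, (π.parts.map (· ^ 2)).sum =
      ∑ k ∈ Finset.Icc 1 n, sigmaIn A 2 k * pIn A (n - k) := by
  calc ∑ π ∈ partitionsIn A n, (π.parts.map (· ^ 2)).sum
      = ∑ π ∈ partitionsIn A n, ∑ a ∈ (Finset.Icc 1 n).filter (· ∈ A),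
          π.parts.count a * a ^ 2 := Finset.sum_congr rfl fun π hπ => sq_sum_eq A hπ
    _ = ∑ a ∈ (Finset.Icc 1 n).filter (· ∈ A), (∑ π ∈ partitionsIn A n,
          π.parts.count a) * a ^ 2 := by
        rw [Finset.sum_comm]; simp [Finset.sum_mul]
    _ = ∑ a ∈ (Finset.Icc 1 n).filter (· ∈ A), (∑ j ∈ Finset.Icc 1 (n / a),
          pIn A (n - j * a)) * a ^ 2 := by
        apply Finset.sum_congr rfl
        intro a haf
        rw [Finset.mem_filter] at haf
        rw [sum_count_eq A haf.2 (hA a haf.2)]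
    _ = ∑ a ∈ (Finset.Icc 1 n).filter (· ∈ A), ∑ j ∈ Finset.Icc 1 (n / a),
          a ^ 2 * pIn A (n - a * j) := by
        apply Finset.sum_congr rfl; intro a _
        rw [Finset.sum_mul]
        apply Finset.sum_congr rfl; intro j _
        rw [mul_comm j a]; ring
    _ = ∑ k ∈ Finset.Icc 1 n, sigmaIn A 2 k * pIn A (n - k) := by
        have hr : ∀ k ∈ Finset.Icc 1 n, sigmaIn A 2 k * pIn A (n - k)
            = ∑ d ∈ k.divisors.filter (· ∈ A), d ^ 2 * pIn A (n - k) := by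
          intro k _; rw [sigmaIn, Finset.sum_mul]
        rw [Finset.sum_congr rfl hr, Finset.sum_sigma', Finset.sum_sigma']
        refine Finset.sum_nbij' (fun p => ⟨p.1 * p.2, p.1⟩) (fun p => ⟨p.2, p.1 / p.2⟩)
          ?_ ?_ ?_ ?_ ?_
        · rintro ⟨a, j⟩ hp
          simp only [Finset.mem_sigma, Finset.mem_filter, Finset.mem_Icc,
            Nat.mem_divisors] at hp ⊢
          obtain ⟨⟨⟨ha1, han⟩, haA⟩, hj1, hjn⟩ := hp
          have hajn : a * j ≤ n := by
            calc a * j ≤ a * (n / a) := Nat.mul_le_mul_left a hjn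
              _ ≤ n := Nat.mul_div_le n a
          exact ⟨⟨Nat.one_le_iff_ne_zero.mpr (by positivity), hajn⟩,
            ⟨⟨Dvd.intro j rfl, by positivity⟩, haA⟩⟩
        · rintro ⟨k, d⟩ hp
          simp only [Finset.mem_sigma, Finset.mem_filter, Finset.mem_Icc,
            Nat.mem_divisors] at hp ⊢
          obtain ⟨⟨hk1, hkn⟩, ⟨hdk, hk0⟩, hdA⟩ := hp
          have hd1 : 1 ≤ d := Nat.one_le_iff_ne_zero.mpr (by rintro rfl; simp at hdk; omega)
          refine ⟨⟨⟨hd1, le_trans (Nat.le_of_dvd (by omega) hdk) hkn⟩, hdA⟩,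
            Nat.one_le_div_iff (by omega) |>.mpr (Nat.le_of_dvd (by omega) hdk),
            Nat.div_le_div_right hkn⟩
        · rintro ⟨a, j⟩ hp
          simp only [Finset.mem_sigma, Finset.mem_filter, Finset.mem_Icc] at hp
          obtain ⟨⟨⟨ha1, _⟩, _⟩, _⟩ := hp
          have hq : a * j / a = j := Nat.mul_div_cancel_left j (by omega)
          simp [hq]
        · rintro ⟨k, d⟩ hp
          simp only [Finset.mem_sigma, Finset.mem_filter, Finset.mem_Icc,
            Nat.mem_divisors] at hp
          obtain ⟨⟨hk1, _⟩, ⟨hdk, _⟩, _⟩ := hp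
          have hq : d * (k / d) = k := Nat.mul_div_cancel' hdk
          simp [hq]
        · rintro ⟨a, j⟩ _
          rfl

lemma nat_identity (A : Set ℕ) [DecidablePred (· ∈ A)] (hA : ∀ a ∈ A, 0 < a) (n : ℕ) :
    2 * ejpIn A 2 n + ∑ k ∈ Finset.Icc 1 n, sigmaIn A 2 k * pIn A (n - k)
      = n ^ 2 * pIn A n := by
  rw [← conv_eq A hA n, ejpIn, Finset.mul_sum, ← Finset.sum_add_distrib]
  have : ∀ π ∈ partitionsIn A n,
      2 * π.parts.esymm 2 + (π.parts.map (· ^ 2)).sum = n ^ 2 := by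
    intro π _
    rw [esymm_two_eq, π.parts_sum]
  rw [Finset.sum_congr rfl this, Finset.sum_const, smul_eq_mul, pIn, mul_comm]

theorem e2pA_formula (A : Set ℕ) [DecidablePred (· ∈ A)] (hA : ∀ a ∈ A, 0 < a)
    (n : ℕ) (hn : 0 < n) :
    (ejpIn A 2 n : ℚ) =
      (1 / 2) * ((n : ℚ) ^ 2 * (pIn A n : ℚ) -
        ∑ k ∈ Finset.Icc 1 n, (sigmaIn A 2 k : ℚ) * (pIn A (n - k) : ℚ)) := by
  have h := nat_identity A hA n
  have hq : ((2 * ejpIn A 2 n + ∑ k ∈ Finset.Icc 1 n, sigmaIn A 2 k * pIn A (n - k) : ℕ) : ℚ)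
      = ((n ^ 2 * pIn A n : ℕ) : ℚ) := by exact_mod_cast congrArg (Nat.cast : ℕ → ℚ) h
  push_cast at hq
  linarith
end

section
/- For every set A of positive integers and every integer n > 0, the sum of the third elementary symmetric polynomial over partitions of n with parts in A satisfies e_3p_A(n) = (1/6) ( n^3 * p(n|A) - Σ_{k=1}^{n} ( 3n * σ_{2,A}(k) - 2 * σ_{3,A}(k) ) * p(n-k|A) ). -/
open Finset

lemma esymm_cons (a : ℕ) (s : Multiset ℕ) (n : ℕ) :
    (a ::ₘ s).esymm (n+1) = s.esymm (n+1) + a * s.esymm n := by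
  simp [Multiset.esymm, Multiset.powersetCard_cons, Multiset.map_map, Function.comp,
    Multiset.sum_map_mul_left]

lemma esymm_one' (s : Multiset ℕ) : s.esymm 1 = s.sum := by
  simp [Multiset.esymm, Multiset.powersetCard_one, Multiset.map_map]

lemma sq_sum (s : Multiset ℕ) :
    s.sum ^ 2 = 2 * s.esymm 2 + (s.map (· ^ 2)).sum := by
  induction s using Multiset.induction with
  | empty => simp [Multiset.esymm, Multiset.powersetCard_eq_empty 2 (show Multiset.card (0 : Multiset ℕ) < 2 by simp)]
  | cons a s ih =>
    have e1 := esymm_cons a s 1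
    rw [esymm_one'] at e1
    norm_num at e1
    rw [Multiset.sum_cons, e1, Multiset.map_cons, Multiset.sum_cons]
    nlinarith [ih]

lemma cube_sum (s : Multiset ℕ) :
    s.sum ^ 3 + 2 * (s.map (· ^ 3)).sum = 6 * s.esymm 3 + 3 * s.sum * (s.map (· ^ 2)).sum := by
  induction s using Multiset.induction with
  | empty => simp [Multiset.esymm, Multiset.powersetCard_eq_empty 3 (show Multiset.card (0 : Multiset ℕ) < 3 by simp)]
  | cons a s ih =>
    have h2 := sq_sum s
    have e2 := esymm_cons a s 2
    norm_num at e2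
    rw [Multiset.sum_cons, Multiset.map_cons, Multiset.sum_cons, Multiset.map_cons,
      Multiset.sum_cons, e2]
    nlinarith [ih, h2]

lemma mem_partitionsIn {A : Set ℕ} [DecidablePred (· ∈ A)] {n : ℕ} {π : Nat.Partition n} :
    π ∈ partitionsIn A n ↔ ∀ i ∈ π.parts, i ∈ A := by
  simp [partitionsIn]

lemma card_count_ge (A : Set ℕ) [DecidablePred (· ∈ A)] (hA : ∀ a ∈ A, 0 < a)
    (n d m : ℕ) (hd : d ∈ A) (hmd : m * d ≤ n) :
    ((partitionsIn A n).filter (fun π => m ≤ π.parts.count d)).card = pIn A (n - m * d) := by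
  have hrep : (Multiset.replicate m d).sum = m * d := by
    simp [Multiset.sum_replicate, smul_eq_mul]
  apply Finset.card_bij' (i := fun π hπ =>
      (⟨π.parts - Multiset.replicate m d,
        fun {i} hi => π.parts_pos (Multiset.mem_of_le (Multiset.sub_le_self _ _) hi), by
          have hle : Multiset.replicate m d ≤ π.parts :=
            Multiset.le_count_iff_replicate_le.mp (Finset.mem_filter.mp hπ).2
          have := congrArg Multiset.sum (tsub_add_cancel_of_le hle)
          rw [Multiset.sum_add, hrep, π.parts_sum] at this
          omega⟩ : Nat.Partition (n - m * d)))
    (j := fun μ hμ =>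
      (⟨μ.parts + Multiset.replicate m d, fun {i} hi => by
          rcases Multiset.mem_add.mp hi with h | h
          · exact μ.parts_pos h
          · rw [Multiset.eq_of_mem_replicate h]; exact hA d hd, by
          rw [Multiset.sum_add, hrep, μ.parts_sum]; omega⟩ : Nat.Partition n))
  · intro π hπ
    ext1
    exact tsub_add_cancel_of_le (Multiset.le_count_iff_replicate_le.mp (Finset.mem_filter.mp hπ).2)
  · intro μ hμ
    ext1
    exact add_tsub_cancel_right _ _
  · intro π hπ
    rw [mem_partitionsIn]
    intro i hi
    exact (mem_partitionsIn.mp (Finset.mem_filter.mp hπ).1) i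
      (Multiset.mem_of_le (Multiset.sub_le_self _ _) hi)
  · intro μ hμ
    rw [Finset.mem_filter]
    constructor
    · rw [mem_partitionsIn]
      intro i hi
      rcases Multiset.mem_add.mp hi with h | h
      · exact mem_partitionsIn.mp hμ i h
      · rw [Multiset.eq_of_mem_replicate h]; exact hd
    · simp [Multiset.count_add, Multiset.count_replicate]

lemma sum_count (A : Set ℕ) [DecidablePred (· ∈ A)] (hA : ∀ a ∈ A, 0 < a)
    (n d : ℕ) (hd : d ∈ A) :
    ∑ π ∈ partitionsIn A n, π.parts.count d
      = ∑ m ∈ Icc 1 (n / d), pIn A (n - m * d) := by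
  have hd0 : 0 < d := hA d hd
  have hc : ∀ π ∈ partitionsIn A n,
      π.parts.count d = ∑ m ∈ Icc 1 (n / d), if m ≤ π.parts.count d then 1 else 0 := by
    intro π _
    have hcle : π.parts.count d ≤ n / d := by
      have hrep : Multiset.replicate (π.parts.count d) d ≤ π.parts :=
        Multiset.le_count_iff_replicate_le.mp le_rfl
      obtain ⟨u, hu⟩ := Multiset.le_iff_exists_add.mp hrep
      have hsum : π.parts.count d * d ≤ n := by
        have := π.parts_sum
        rw [hu, Multiset.sum_add, Multiset.sum_replicate, smul_eq_mul] at this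
        omega
      exact Nat.le_div_iff_mul_le hd0 |>.mpr hsum
    rw [← Finset.sum_filter]
    have : (Icc 1 (n / d)).filter (fun m => m ≤ π.parts.count d) = Icc 1 (π.parts.count d) := by
      ext m; simp only [mem_filter, mem_Icc]; omega
    simp [this]
  rw [Finset.sum_congr rfl hc, Finset.sum_comm]
  refine Finset.sum_congr rfl fun m hm => ?_
  rw [← Finset.sum_filter]
  simp only [Finset.sum_const, smul_eq_mul, mul_one]
  rw [mem_Icc] at hm
  exact card_count_ge A hA n d m hd (Nat.le_div_iff_mul_le hd0 |>.mp hm.2)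

lemma psum_eq (A : Set ℕ) [DecidablePred (· ∈ A)] (hA : ∀ a ∈ A, 0 < a) (n j : ℕ) :
    ∑ π ∈ partitionsIn A n, (π.parts.map (· ^ j)).sum
      = ∑ k ∈ Icc 1 n, sigmaIn A j k * pIn A (n - k) := by
  have h1 : ∀ π ∈ partitionsIn A n,
      (π.parts.map (· ^ j)).sum = ∑ d ∈ Icc 1 n, π.parts.count d * d ^ j := by
    intro π _
    rw [Finset.sum_multiset_map_count]
    simp_rw [smul_eq_mul]
    refine Finset.sum_subset ?_ ?_
    · intro d hdm
      rw [Multiset.mem_toFinset] at hdm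
      have h1 : 0 < d := π.parts_pos hdm
      have h2 : d ≤ n := by
        have := Multiset.single_le_sum (fun x _ => Nat.zero_le x) d hdm
        simpa [π.parts_sum] using this
      simp only [mem_Icc]; omega
    · intro d _ hdm
      rw [Multiset.mem_toFinset] at hdm
      simp [Multiset.count_eq_zero_of_notMem hdm]
  rw [Finset.sum_congr rfl h1, Finset.sum_comm]
  have h2 : ∀ d ∈ Icc 1 n, ∑ π ∈ partitionsIn A n, π.parts.count d * d ^ j
      = if d ∈ A then ∑ m ∈ Icc 1 (n / d), d ^ j * pIn A (n - m * d) else 0 := by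
    intro d _
    by_cases hd : d ∈ A
    · rw [if_pos hd, ← Finset.sum_mul, sum_count A hA n d hd, Finset.sum_mul]
      exact Finset.sum_congr rfl fun m _ => mul_comm _ _
    · rw [if_neg hd]
      refine Finset.sum_eq_zero fun π hπ => ?_
      have : d ∉ π.parts := fun h => hd (mem_partitionsIn.mp hπ d h)
      simp [Multiset.count_eq_zero_of_notMem this]
  rw [Finset.sum_congr rfl h2]
  have h3 : ∀ k ∈ Icc 1 n, sigmaIn A j k * pIn A (n - k)
      = ∑ d ∈ Icc 1 n, if d ∈ k.divisors.filter (· ∈ A) then d ^ j * pIn A (n - k) else 0 := by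
    intro k hk
    rw [Finset.sum_ite_mem, Finset.inter_eq_right.mpr, sigmaIn, Finset.sum_mul]
    intro d hdm
    simp only [mem_filter, Nat.mem_divisors] at hdm
    rw [mem_Icc] at hk ⊢
    have := Nat.le_of_dvd (by omega) hdm.1.1
    have := hA d hdm.2
    omega
  rw [Finset.sum_congr rfl h3, Finset.sum_comm]
  refine Finset.sum_congr rfl fun d hd => ?_
  rw [mem_Icc] at hd
  by_cases hdA : d ∈ A
  · rw [if_pos hdA]
    have hd0 : 0 < d := hA d hdA
    rw [← Finset.sum_filter]
    refine Finset.sum_nbij' (i := fun m => m * d) (j := fun k => k / d) ?_ ?_ ?_ ?_ ?_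
    · intro m hm
      rw [mem_Icc] at hm
      have h1 : m * d ≤ n := Nat.le_div_iff_mul_le hd0 |>.mp hm.2
      rw [mem_filter, mem_Icc, mem_filter, Nat.mem_divisors]
      refine ⟨⟨?_, h1⟩, ⟨dvd_mul_left d m, ?_⟩, hdA⟩
      · have := hm.1; nlinarith
      · have := hm.1; positivity
    · intro k hk
      rw [mem_filter, mem_Icc, mem_filter, Nat.mem_divisors] at hk
      rw [mem_Icc]
      refine ⟨?_, Nat.div_le_div_right hk.1.2⟩
      rw [Nat.le_div_iff_mul_le hd0, one_mul]
      exact Nat.le_of_dvd (by omega) hk.2.1.1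
    · intro m hm
      exact Nat.mul_div_cancel m hd0
    · intro k hk
      rw [mem_filter, mem_filter, Nat.mem_divisors] at hk
      exact Nat.div_mul_cancel hk.2.1.1
    · intro m hm
      rfl
  · rw [if_neg hdA]
    refine (Finset.sum_eq_zero fun k _ => ?_).symm
    rw [if_neg]
    simp only [mem_filter]
    tauto

theorem e3pA_formula (A : Set ℕ) [DecidablePred (· ∈ A)] (hA : ∀ a ∈ A, 0 < a)
    (n : ℕ) (hn : 0 < n) :
    (ejpIn A 3 n : ℚ) =
      (1 / 6) * ((n : ℚ) ^ 3 * (pIn A n : ℚ) -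
        ∑ k ∈ Finset.Icc 1 n,
          (3 * (n : ℚ) * (sigmaIn A 2 k : ℚ) - 2 * (sigmaIn A 3 k : ℚ)) *
            (pIn A (n - k) : ℚ)) := by
  have hπ : ∀ π : Nat.Partition n,
      n ^ 3 + 2 * (π.parts.map (· ^ 3)).sum
        = 6 * π.parts.esymm 3 + 3 * n * (π.parts.map (· ^ 2)).sum := by
    intro π
    have := cube_sum π.parts
    rwa [π.parts_sum] at this
  have key : ∑ π ∈ partitionsIn A n, (n ^ 3 + 2 * (π.parts.map (· ^ 3)).sum)
      = ∑ π ∈ partitionsIn A n, (6 * π.parts.esymm 3 + 3 * n * (π.parts.map (· ^ 2)).sum) :=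
    Finset.sum_congr rfl fun π _ => hπ π
  rw [Finset.sum_add_distrib, Finset.sum_add_distrib, Finset.sum_const, ← Finset.mul_sum,
    ← Finset.mul_sum, ← Finset.mul_sum, psum_eq A hA n 3, psum_eq A hA n 2] at key
  have key2 : (partitionsIn A n).card • n ^ 3
        + 2 * ∑ k ∈ Icc 1 n, sigmaIn A 3 k * pIn A (n - k)
      = 6 * ejpIn A 3 n + 3 * n * ∑ k ∈ Icc 1 n, sigmaIn A 2 k * pIn A (n - k) := key
  rw [smul_eq_mul] at key2
  have hcard : (partitionsIn A n).card = pIn A n := rfl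
  rw [hcard] at key2
  have keyQ : (pIn A n : ℚ) * (n : ℚ) ^ 3
        + 2 * ∑ k ∈ Icc 1 n, (sigmaIn A 3 k : ℚ) * (pIn A (n - k) : ℚ)
      = 6 * (ejpIn A 3 n : ℚ)
        + 3 * (n : ℚ) * ∑ k ∈ Icc 1 n, (sigmaIn A 2 k : ℚ) * (pIn A (n - k) : ℚ) := by
    exact_mod_cast congrArg (Nat.cast : ℕ → ℚ) key2
  have hsplit : ∑ k ∈ Finset.Icc 1 n,
        (3 * (n : ℚ) * (sigmaIn A 2 k : ℚ) - 2 * (sigmaIn A 3 k : ℚ)) * (pIn A (n - k) : ℚ)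
      = 3 * (n : ℚ) * ∑ k ∈ Icc 1 n, (sigmaIn A 2 k : ℚ) * (pIn A (n - k) : ℚ)
        - 2 * ∑ k ∈ Icc 1 n, (sigmaIn A 3 k : ℚ) * (pIn A (n - k) : ℚ) := by
    rw [Finset.mul_sum, Finset.mul_sum, ← Finset.sum_sub_distrib]
    exact Finset.sum_congr rfl fun k _ => by ring
  rw [hsplit]
  linarith [keyQ]
end

section
/- For every integer n > 0, e_2B(n) = (1/2) ( n^2 * B(n) - Σ_{k=1}^{n} σ_{2,bin}(k) * B(n-k) ). -/
open Finset
open scoped Classical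

/-- The finset of binary partitions of `n` (all parts are powers of `2`). -/
noncomputable def binaryPartitions (n : ℕ) : Finset (Nat.Partition n) :=
  Finset.univ.filter fun π => ∀ i ∈ π.parts, ∃ k : ℕ, i = 2 ^ k

/-- `B(n)`, the number of binary partitions of `n`. -/
noncomputable def Bbin (n : ℕ) : ℕ := (binaryPartitions n).card

/-- `e_j B(n)`, the sum of the `j`-th elementary symmetric polynomial evaluated at the
parts over all binary partitions of `n`. -/
noncomputable def ejB (j n : ℕ) : ℕ := ∑ π ∈ binaryPartitions n, π.parts.esymm j

/-- `σ_{j,bin}(n) = Σ_{d ≥ 0, 2^d ∣ n} 2^{d·j}`. -/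
def sigmaBin (j n : ℕ) : ℕ :=
  ∑ d ∈ (Finset.range (n + 1)).filter (fun d => 2 ^ d ∣ n), 2 ^ (d * j)

lemma esymm_two_sq (s : Multiset ℕ) :
    s.sum ^ 2 = (s.map (· ^ 2)).sum + 2 * s.esymm 2 := by
  induction s using Multiset.induction with
  | empty => simp [Multiset.esymm, Multiset.powersetCard_zero_right]
  | cons a s ih =>
    have hms : (Multiset.map (fun x => a * x) s).sum = a * s.sum := by
      rw [show (fun x => a*x) = (fun x => a * id x) from rfl, Multiset.sum_map_mul_left]; simp
    have h1 : (a ::ₘ s).esymm 2 = s.esymm 2 + a * s.sum := by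
      simp [Multiset.esymm, Multiset.powersetCard_cons, Multiset.powersetCard_one,
        Multiset.map_map, Function.comp, hms]
    simp only [Multiset.sum_cons, Multiset.map_cons, h1]
    nlinarith [ih]

lemma card_count_filter (n m r : ℕ) (hk : ∃ k, m = 2 ^ k) (hr : 0 < r) (hrm : r * m ≤ n) :
    ((binaryPartitions n).filter fun π => r ≤ π.parts.count m).card = Bbin (n - r * m) := by
  have hm : 0 < m := by obtain ⟨k, rfl⟩ := hk; positivity
  rw [Bbin]
  refine Finset.card_bij'
    (i := fun π hπ => ⟨π.parts - Multiset.replicate r m,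
      fun hi => π.parts_pos (Multiset.mem_of_le (tsub_le_self) hi), by
        have hle : Multiset.replicate r m ≤ π.parts :=
          Multiset.le_count_iff_replicate_le.mp (Finset.mem_filter.mp hπ).2
        have hsum : (π.parts - Multiset.replicate r m).sum + (Multiset.replicate r m).sum
            = π.parts.sum := by
          rw [← Multiset.sum_add, tsub_add_cancel_of_le hle]
        rw [Multiset.sum_replicate, π.parts_sum, smul_eq_mul] at hsum
        omega⟩)
    (j := fun τ hτ => ⟨τ.parts + Multiset.replicate r m, by
        intro i hi
        rcases Multiset.mem_add.mp hi with h | h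
        · exact τ.parts_pos h
        · rw [Multiset.eq_of_mem_replicate h]; exact hm, by
        rw [Multiset.sum_add, τ.parts_sum, Multiset.sum_replicate, smul_eq_mul]
        omega⟩) ?_ ?_ ?_ ?_
  · intro π hπ
    simp only [binaryPartitions, Finset.mem_filter, Finset.mem_univ, true_and] at hπ ⊢
    exact fun i hi => hπ.1 i (Multiset.mem_of_le tsub_le_self hi)
  · intro τ hτ
    simp only [binaryPartitions, Finset.mem_filter, Finset.mem_univ, true_and] at hτ ⊢
    constructor
    · intro i hi
      rcases Multiset.mem_add.mp hi with h | h
      · exact hτ i h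
      · rw [Multiset.eq_of_mem_replicate h]; exact hk
    · simp [Multiset.count_replicate]
  · intro π hπ
    ext1
    simp only
    exact tsub_add_cancel_of_le
      (Multiset.le_count_iff_replicate_le.mp (Finset.mem_filter.mp hπ).2)
  · intro τ hτ
    ext1
    simp only
    exact add_tsub_cancel_right _ _

lemma count_mul_le (n m : ℕ) (π : Nat.Partition n) : π.parts.count m * m ≤ n := by
  have hle : Multiset.replicate (π.parts.count m) m ≤ π.parts :=
    Multiset.le_count_iff_replicate_le.mp le_rfl
  obtain ⟨u, hu⟩ := Multiset.le_iff_exists_add.mp hle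
  have := congrArg Multiset.sum hu
  rw [Multiset.sum_add, π.parts_sum, Multiset.sum_replicate, smul_eq_mul] at this
  omega

lemma sum_count_eq_s7 (n m : ℕ) (hm : 0 < m) (hk : ∃ k, m = 2 ^ k) :
    ∑ π ∈ binaryPartitions n, π.parts.count m
      = ∑ r ∈ Finset.Icc 1 n, if r * m ≤ n then Bbin (n - r * m) else 0 := by
  have hcount : ∀ π : Nat.Partition n, π.parts.count m
      = ∑ r ∈ Finset.Icc 1 n, if r ≤ π.parts.count m then 1 else 0 := by
    intro π
    have h1 : π.parts.count m ≤ n := by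
      have := count_mul_le n m π; nlinarith
    rw [← Finset.sum_filter]
    have : (Finset.Icc 1 n).filter (fun r => r ≤ π.parts.count m)
        = Finset.Icc 1 (π.parts.count m) := by
      ext r; simp only [Finset.mem_filter, Finset.mem_Icc]; omega
    simp [this]
  calc ∑ π ∈ binaryPartitions n, π.parts.count m
      = ∑ π ∈ binaryPartitions n, ∑ r ∈ Finset.Icc 1 n,
          if r ≤ π.parts.count m then 1 else 0 := by
        exact Finset.sum_congr rfl fun π _ => hcount π
    _ = ∑ r ∈ Finset.Icc 1 n, ∑ π ∈ binaryPartitions n,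
          if r ≤ π.parts.count m then 1 else 0 := Finset.sum_comm
    _ = ∑ r ∈ Finset.Icc 1 n, if r * m ≤ n then Bbin (n - r * m) else 0 := by
        refine Finset.sum_congr rfl fun r hr => ?_
        rw [Finset.mem_Icc] at hr
        rw [← Finset.card_filter]
        by_cases h : r * m ≤ n
        · rw [if_pos h, card_count_filter n m r hk (by omega) h]
        · rw [if_neg h]
          rw [Finset.card_eq_zero, Finset.filter_eq_empty_iff]
          intro π _
          simp only [not_le]
          by_contra hc
          push_neg at hc
          have := count_mul_le n m π
          nlinarith

lemma map_sq_sum_eq (n : ℕ) (π : Nat.Partition n) :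
    (π.parts.map (· ^ 2)).sum = ∑ m ∈ Finset.Icc 1 n, π.parts.count m * m ^ 2 := by
  rw [Finset.sum_multiset_map_count]
  refine Finset.sum_subset ?_ ?_
  · intro m hm
    rw [Multiset.mem_toFinset] at hm
    rw [Finset.mem_Icc]
    refine ⟨π.parts_pos hm, ?_⟩
    rw [← π.parts_sum]
    exact Multiset.le_sum_of_mem hm
  · intro m _ hm
    rw [Multiset.mem_toFinset] at hm
    simp [Multiset.count_eq_zero_of_notMem hm]

lemma key (n : ℕ) :
    ∑ m ∈ Finset.Icc 1 n, (∑ π ∈ binaryPartitions n, π.parts.count m) * m ^ 2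
      = ∑ k ∈ Finset.Icc 1 n, sigmaBin 2 k * Bbin (n - k) := by
  set g : ℕ → ℕ := fun m => (∑ π ∈ binaryPartitions n, π.parts.count m) * m ^ 2 with hg
  have hcount0 : ∀ m, n < m → ∀ π : Nat.Partition n, π.parts.count m = 0 := by
    intro m hm π
    rw [Multiset.count_eq_zero]
    intro hmem
    have : m ≤ n := by rw [← π.parts_sum]; exact Multiset.le_sum_of_mem hmem
    omega
  have h1 : ∑ m ∈ Finset.Icc 1 n, g m
      = ∑ m ∈ (Finset.Icc 1 n).filter (fun m => ∃ d, m = 2 ^ d), g m := by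
    rw [Finset.sum_filter_of_ne]
    intro m _ hgm
    by_contra hp
    push_neg at hp
    apply hgm
    rw [hg]
    simp only
    have : ∑ π ∈ binaryPartitions n, π.parts.count m = 0 := by
      refine Finset.sum_eq_zero fun π hπ => ?_
      rw [Multiset.count_eq_zero]
      intro hmem
      simp only [binaryPartitions, Finset.mem_filter] at hπ
      obtain ⟨d, hd⟩ := hπ.2 m hmem
      exact hp d hd
    rw [this, zero_mul]
  have h2 : (Finset.Icc 1 n).filter (fun m => ∃ d, m = 2 ^ d)
      = ((Finset.range (n + 1)).filter (fun d => 2 ^ d ≤ n)).image (2 ^ ·) := by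
    ext m
    simp only [Finset.mem_filter, Finset.mem_Icc, Finset.mem_image, Finset.mem_range]
    constructor
    · rintro ⟨⟨h1m, h2m⟩, d, rfl⟩
      exact ⟨d, ⟨by have := Nat.lt_two_pow_self (n := d); omega, h2m⟩, rfl⟩
    · rintro ⟨d, ⟨hdn, hdm⟩, rfl⟩
      exact ⟨⟨Nat.one_le_two_pow, hdm⟩, d, rfl⟩
  have h3 : ∑ m ∈ ((Finset.range (n + 1)).filter (fun d => 2 ^ d ≤ n)).image (2 ^ ·), g m
      = ∑ d ∈ (Finset.range (n + 1)).filter (fun d => 2 ^ d ≤ n), g (2 ^ d) := by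
    refine Finset.sum_image fun x _ y _ h => Nat.pow_right_injective le_rfl h
  have h4 : ∑ d ∈ (Finset.range (n + 1)).filter (fun d => 2 ^ d ≤ n), g (2 ^ d)
      = ∑ d ∈ Finset.range (n + 1), g (2 ^ d) := by
    refine Finset.sum_filter_of_ne fun d _ hne => ?_
    by_contra hle
    push_neg at hle
    apply hne
    rw [hg]; simp only
    rw [Finset.sum_congr rfl (fun π _ => hcount0 _ hle π), Finset.sum_const, smul_eq_mul,
      mul_zero, zero_mul]
  have h5 : ∑ d ∈ Finset.range (n + 1), g (2 ^ d)
      = ∑ d ∈ Finset.range (n + 1), ∑ r ∈ (Finset.Icc 1 n).filter (fun r => r * 2 ^ d ≤ n),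
          2 ^ (d * 2) * Bbin (n - r * 2 ^ d) := by
    refine Finset.sum_congr rfl fun d _ => ?_
    rw [hg]; simp only
    rw [sum_count_eq_s7 n (2 ^ d) (by positivity) ⟨d, rfl⟩, Finset.sum_mul, Finset.sum_filter]
    refine Finset.sum_congr rfl fun r _ => ?_
    split_ifs with h
    · rw [← pow_mul]; ring
    · simp
  have h6 : ∑ d ∈ Finset.range (n + 1), ∑ r ∈ (Finset.Icc 1 n).filter (fun r => r * 2 ^ d ≤ n),
          2 ^ (d * 2) * Bbin (n - r * 2 ^ d)
      = ∑ k ∈ Finset.Icc 1 n, sigmaBin 2 k * Bbin (n - k) := by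
    simp only [sigmaBin, Finset.sum_mul]
    rw [Finset.sum_sigma', Finset.sum_sigma']
    refine Finset.sum_nbij' (i := fun p => ⟨p.2 * 2 ^ p.1, p.1⟩)
      (j := fun q => ⟨q.2, q.1 / 2 ^ q.2⟩) ?_ ?_ ?_ ?_ (fun p _ => rfl)
    · rintro ⟨d, r⟩ hp
      simp only [Finset.mem_sigma, Finset.mem_range, Finset.mem_filter, Finset.mem_Icc] at hp ⊢
      obtain ⟨hd, ⟨hr1, hrn⟩, hrm⟩ := hp
      have h2d : 0 < 2 ^ d := by positivity
      refine ⟨⟨by nlinarith, hrm⟩, ?_, ⟨r, by ring⟩⟩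
      have := Nat.lt_two_pow_self (n := d)
      nlinarith
    · rintro ⟨k, d⟩ hq
      simp only [Finset.mem_sigma, Finset.mem_range, Finset.mem_filter, Finset.mem_Icc] at hq ⊢
      obtain ⟨⟨hk1, hkn⟩, hdk, hdvd⟩ := hq
      have h2d : 0 < 2 ^ d := by positivity
      have hle : 2 ^ d ≤ k := Nat.le_of_dvd (by omega) hdvd
      have hdiv : k / 2 ^ d * 2 ^ d = k := Nat.div_mul_cancel hdvd
      refine ⟨by omega, ⟨?_, ?_⟩, by omega⟩
      · rw [Nat.le_div_iff_mul_le h2d]; omega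
      · calc k / 2 ^ d ≤ k := Nat.div_le_self _ _
          _ ≤ n := hkn
    · rintro ⟨d, r⟩ hp
      simp only [Finset.mem_sigma, Finset.mem_range, Finset.mem_filter, Finset.mem_Icc] at hp
      have h2d : 0 < 2 ^ d := by positivity
      simp [Nat.mul_div_cancel _ h2d]
    · rintro ⟨k, d⟩ hq
      simp only [Finset.mem_sigma, Finset.mem_range, Finset.mem_filter, Finset.mem_Icc] at hq
      have hdiv : k / 2 ^ d * 2 ^ d = k := Nat.div_mul_cancel hq.2.2
      simp [hdiv]
  rw [h1, h2, h3, h4, h5, h6]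

lemma nat_identity_s7 (n : ℕ) :
    n ^ 2 * Bbin n
      = (∑ k ∈ Finset.Icc 1 n, sigmaBin 2 k * Bbin (n - k)) + 2 * ejB 2 n := by
  have h1 : n ^ 2 * Bbin n = ∑ π ∈ binaryPartitions n, (π.parts.sum) ^ 2 := by
    rw [Finset.sum_congr rfl fun (π : Nat.Partition n) _ => by rw [π.parts_sum],
      Finset.sum_const, smul_eq_mul, Bbin, mul_comm]
  rw [h1, Finset.sum_congr rfl fun (π : Nat.Partition n) _ => esymm_two_sq π.parts,
    Finset.sum_add_distrib, ← Finset.mul_sum, ← ejB]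
  congr 1
  rw [Finset.sum_congr rfl fun (π : Nat.Partition n) _ => map_sq_sum_eq n π, Finset.sum_comm]
  rw [← key n]
  exact Finset.sum_congr rfl fun m _ => by rw [Finset.sum_mul]

theorem e2B_formula (n : ℕ) (hn : 0 < n) :
    (ejB 2 n : ℚ) =
      (1 / 2) * ((n : ℚ) ^ 2 * (Bbin n : ℚ) -
        ∑ k ∈ Finset.Icc 1 n, (sigmaBin 2 k : ℚ) * (Bbin (n - k) : ℚ)) := by
  have h := nat_identity_s7 n
  have hq : ((n : ℚ)) ^ 2 * (Bbin n : ℚ)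
      = (∑ k ∈ Finset.Icc 1 n, (sigmaBin 2 k : ℚ) * (Bbin (n - k) : ℚ)) + 2 * (ejB 2 n : ℚ) := by
    exact_mod_cast congrArg (Nat.cast : ℕ → ℚ) h
  linarith
end

section
/- For every integer n ≥ 0, e_2p_4(n+48) ≡ e_2p_4(n) (mod 2), where e_2p_4(n) is the sum of e_2(λ) over all partitions λ of n with exactly 4 parts. -/
open Finset

def S2 (n : ℕ) : Finset (ℕ × ℕ) :=
  (range (n+1) ×ˢ range (n+1)).filter fun p => 1 ≤ p.2 ∧ p.2 ≤ p.1 ∧ p.1 + p.2 = n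

lemma mem_S2 {n : ℕ} {p : ℕ × ℕ} : p ∈ S2 n ↔ 1 ≤ p.2 ∧ p.2 ≤ p.1 ∧ p.1 + p.2 = n := by
  simp [S2, Finset.mem_filter, Finset.mem_product, Finset.mem_range]
  omega

def F2 (n : ℕ) : ℕ := ∑ p ∈ S2 n, p.1 * p.2
def P2 (n : ℕ) : ℕ := (S2 n).card

lemma S2_succ (n : ℕ) :
    S2 (n+2) = (S2 n).image (fun p => (p.1+1, p.2+1)) ∪ {(n+1,1)} := by
  ext p
  simp only [Finset.mem_union, Finset.mem_image, Finset.mem_singleton, mem_S2]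
  constructor
  · rintro ⟨h1, h2, h3⟩
    rcases Nat.lt_or_ge p.2 2 with h | h
    · right; have : p.2 = 1 := by omega
      have : p.1 = n+1 := by omega
      exact Prod.ext (by omega) (by omega)
    · left; exact ⟨(p.1-1, p.2-1), by simp; omega, by simp; ext <;> simp <;> omega⟩
  · rintro (⟨q, hq, rfl⟩ | rfl)
    · simp; omega
    · simp

lemma disj2 (n : ℕ) :
    Disjoint ((S2 n).image (fun p => (p.1+1, p.2+1))) ({((n:ℕ)+1,1)} : Finset (ℕ × ℕ)) := by
  simp only [Finset.disjoint_singleton_right, Finset.mem_image, mem_S2]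
  rintro ⟨q, hq, h⟩
  have := congrArg Prod.snd h
  simp at this
  omega

lemma inj2 (n : ℕ) : Set.InjOn (fun p : ℕ × ℕ => (p.1+1, p.2+1)) (S2 n) := by
  rintro ⟨a,b⟩ _ ⟨c,d⟩ _ h
  simp at h
  ext <;> simp <;> omega

lemma P2_rec (n : ℕ) : P2 (n+2) = P2 n + 1 := by
  rw [P2, S2_succ, Finset.card_union_of_disjoint (disj2 n),
    Finset.card_image_of_injOn (inj2 n), Finset.card_singleton, P2]

lemma F2_rec (n : ℕ) : F2 (n+2) = F2 n + (n+1) * P2 n + (n+1) := by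
  rw [F2, S2_succ, Finset.sum_union (disj2 n), Finset.sum_image (inj2 n), Finset.sum_singleton]
  have : ∑ p ∈ S2 n, ((p.1+1) * (p.2+1)) = ∑ p ∈ S2 n, (p.1 * p.2 + (n+1)) := by
    refine Finset.sum_congr rfl fun p hp => ?_
    rw [mem_S2] at hp
    have h : p.1 + p.2 = n := hp.2.2
    have : (p.1+1) * (p.2+1) = p.1 * p.2 + (p.1 + p.2) + 1 := by ring
    rw [this, h]; ring
  rw [this, Finset.sum_add_distrib, Finset.sum_const, smul_eq_mul]
  rw [F2, P2]
  ring

def S3 (n : ℕ) : Finset (ℕ × ℕ × ℕ) :=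
  (range (n+1) ×ˢ range (n+1) ×ˢ range (n+1)).filter
    fun p => 1 ≤ p.2.2 ∧ p.2.2 ≤ p.2.1 ∧ p.2.1 ≤ p.1 ∧ p.1 + p.2.1 + p.2.2 = n

lemma mem_S3 {n : ℕ} {p : ℕ × ℕ × ℕ} :
    p ∈ S3 n ↔ 1 ≤ p.2.2 ∧ p.2.2 ≤ p.2.1 ∧ p.2.1 ≤ p.1 ∧ p.1 + p.2.1 + p.2.2 = n := by
  simp [S3, Finset.mem_filter, Finset.mem_product, Finset.mem_range]
  omega

def F3 (n : ℕ) : ℕ := ∑ p ∈ S3 n, (p.1 * p.2.1 + p.1 * p.2.2 + p.2.1 * p.2.2)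
def P3 (n : ℕ) : ℕ := (S3 n).card

lemma S3_succ (n : ℕ) :
    S3 (n+3) = (S3 n).image (fun p => (p.1+1, p.2.1+1, p.2.2+1))
      ∪ (S2 (n+2)).image (fun p => (p.1, p.2, 1)) := by
  ext p
  simp only [Finset.mem_union, Finset.mem_image, mem_S3, mem_S2]
  constructor
  · rintro ⟨h1, h2, h3, h4⟩
    rcases Nat.lt_or_ge p.2.2 2 with h | h
    · right
      exact ⟨(p.1, p.2.1), by simp; omega,
        by ext <;> simp <;> omega⟩
    · left
      exact ⟨(p.1-1, p.2.1-1, p.2.2-1), by simp; omega, by ext <;> simp <;> omega⟩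
  · rintro (⟨q, hq, rfl⟩ | ⟨q, hq, rfl⟩) <;> simp <;> omega

lemma disj3 (n : ℕ) :
    Disjoint ((S3 n).image (fun p => (p.1+1, p.2.1+1, p.2.2+1)))
      ((S2 (n+2)).image (fun p => (p.1, p.2, 1))) := by
  rw [Finset.disjoint_left]
  rintro p hp hq
  simp only [Finset.mem_image, mem_S3, mem_S2] at hp hq
  obtain ⟨q, hq1, rfl⟩ := hp
  obtain ⟨r, hr1, hr⟩ := hq
  have := congrArg (fun x : ℕ × ℕ × ℕ => x.2.2) hr
  simp at this
  omega

lemma inj3a (n : ℕ) : Set.InjOn (fun p : ℕ × ℕ × ℕ => (p.1+1, p.2.1+1, p.2.2+1)) (S3 n) := by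
  rintro ⟨a,b,c⟩ _ ⟨d,e,f⟩ _ h
  simp at h
  ext <;> simp <;> omega

lemma inj3b (n : ℕ) : Set.InjOn (fun p : ℕ × ℕ => (p.1, p.2, 1)) (S2 (n+2)) := by
  rintro ⟨a,b⟩ _ ⟨c,d⟩ _ h
  simp at h
  ext <;> simp <;> omega

lemma P3_rec (n : ℕ) : P3 (n+3) = P3 n + P2 (n+2) := by
  rw [P3, S3_succ, Finset.card_union_of_disjoint (disj3 n),
    Finset.card_image_of_injOn (inj3a n), Finset.card_image_of_injOn (inj3b n), P3, P2]

lemma F3_rec (n : ℕ) : F3 (n+3) = F3 n + (2*n+3) * P3 n + (F2 (n+2) + (n+2) * P2 (n+2)) := by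
  rw [F3, S3_succ, Finset.sum_union (disj3 n), Finset.sum_image (inj3a n),
    Finset.sum_image (inj3b n)]
  have h1 : ∑ p ∈ S3 n, ((p.1+1) * (p.2.1+1) + (p.1+1) * (p.2.2+1) + (p.2.1+1) * (p.2.2+1))
      = ∑ p ∈ S3 n, ((p.1 * p.2.1 + p.1 * p.2.2 + p.2.1 * p.2.2) + (2*n+3)) := by
    refine Finset.sum_congr rfl fun p hp => ?_
    rw [mem_S3] at hp
    have h : p.1 + p.2.1 + p.2.2 = n := hp.2.2.2
    have : (p.1+1) * (p.2.1+1) + (p.1+1) * (p.2.2+1) + (p.2.1+1) * (p.2.2+1)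
        = (p.1 * p.2.1 + p.1 * p.2.2 + p.2.1 * p.2.2) + 2*(p.1 + p.2.1 + p.2.2) + 3 := by ring
    rw [this, h]; ring
  have h2 : ∑ p ∈ S2 (n+2), (p.1 * p.2 + p.1 * 1 + p.2 * 1)
      = ∑ p ∈ S2 (n+2), (p.1 * p.2 + (n+2)) := by
    refine Finset.sum_congr rfl fun p hp => ?_
    rw [mem_S2] at hp
    omega
  rw [h1, h2]
  simp only [Finset.sum_add_distrib, Finset.sum_const, smul_eq_mul, F3, P3, F2, P2]
  ring

def S4 (n : ℕ) : Finset (ℕ × ℕ × ℕ × ℕ) :=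
  (range (n+1) ×ˢ range (n+1) ×ˢ range (n+1) ×ˢ range (n+1)).filter
    fun p => 1 ≤ p.2.2.2 ∧ p.2.2.2 ≤ p.2.2.1 ∧ p.2.2.1 ≤ p.2.1 ∧ p.2.1 ≤ p.1 ∧
      p.1 + p.2.1 + p.2.2.1 + p.2.2.2 = n

lemma mem_S4 {n : ℕ} {p : ℕ × ℕ × ℕ × ℕ} :
    p ∈ S4 n ↔ 1 ≤ p.2.2.2 ∧ p.2.2.2 ≤ p.2.2.1 ∧ p.2.2.1 ≤ p.2.1 ∧ p.2.1 ≤ p.1 ∧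
      p.1 + p.2.1 + p.2.2.1 + p.2.2.2 = n := by
  simp [S4, Finset.mem_filter, Finset.mem_product, Finset.mem_range]
  omega

def w4 (p : ℕ × ℕ × ℕ × ℕ) : ℕ :=
  p.1 * p.2.1 + p.1 * p.2.2.1 + p.1 * p.2.2.2 +
    (p.2.1 * p.2.2.1 + p.2.1 * p.2.2.2 + p.2.2.1 * p.2.2.2)

def F4 (n : ℕ) : ℕ := ∑ p ∈ S4 n, w4 p
def P4 (n : ℕ) : ℕ := (S4 n).card

lemma S4_succ (n : ℕ) :
    S4 (n+4) = (S4 n).image (fun p => (p.1+1, p.2.1+1, p.2.2.1+1, p.2.2.2+1))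
      ∪ (S3 (n+3)).image (fun p => (p.1, p.2.1, p.2.2, 1)) := by
  ext p
  simp only [Finset.mem_union, Finset.mem_image, mem_S4, mem_S3]
  constructor
  · rintro ⟨h1, h2, h3, h4, h5⟩
    rcases Nat.lt_or_ge p.2.2.2 2 with h | h
    · right
      exact ⟨(p.1, p.2.1, p.2.2.1), by simp; omega, by ext <;> simp <;> omega⟩
    · left
      exact ⟨(p.1-1, p.2.1-1, p.2.2.1-1, p.2.2.2-1), by simp; omega, by ext <;> simp <;> omega⟩
  · rintro (⟨q, hq, rfl⟩ | ⟨q, hq, rfl⟩) <;> simp <;> omega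

lemma disj4 (n : ℕ) :
    Disjoint ((S4 n).image (fun p => (p.1+1, p.2.1+1, p.2.2.1+1, p.2.2.2+1)))
      ((S3 (n+3)).image (fun p => (p.1, p.2.1, p.2.2, 1))) := by
  rw [Finset.disjoint_left]
  rintro p hp hq
  simp only [Finset.mem_image, mem_S4, mem_S3] at hp hq
  obtain ⟨q, hq1, rfl⟩ := hp
  obtain ⟨r, hr1, hr⟩ := hq
  have := congrArg (fun x : ℕ × ℕ × ℕ × ℕ => x.2.2.2) hr
  simp at this
  omega

lemma inj4a (n : ℕ) :
    Set.InjOn (fun p : ℕ × ℕ × ℕ × ℕ => (p.1+1, p.2.1+1, p.2.2.1+1, p.2.2.2+1)) (S4 n) := by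
  rintro ⟨a,b,c,d⟩ _ ⟨e,f,g,h⟩ _ hh
  simp at hh
  ext <;> simp <;> omega

lemma inj4b (n : ℕ) : Set.InjOn (fun p : ℕ × ℕ × ℕ => (p.1, p.2.1, p.2.2, 1)) (S3 (n+3)) := by
  rintro ⟨a,b,c⟩ _ ⟨d,e,f⟩ _ h
  simp at h
  ext <;> simp <;> omega

lemma P4_rec (n : ℕ) : P4 (n+4) = P4 n + P3 (n+3) := by
  rw [P4, S4_succ, Finset.card_union_of_disjoint (disj4 n),
    Finset.card_image_of_injOn (inj4a n), Finset.card_image_of_injOn (inj4b n), P4, P3]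

lemma F4_rec (n : ℕ) : F4 (n+4) = F4 n + (3*n+6) * P4 n + (F3 (n+3) + (n+3) * P3 (n+3)) := by
  rw [F4, S4_succ, Finset.sum_union (disj4 n), Finset.sum_image (inj4a n),
    Finset.sum_image (inj4b n)]
  have h1 : ∑ p ∈ S4 n, w4 (p.1+1, p.2.1+1, p.2.2.1+1, p.2.2.2+1)
      = ∑ p ∈ S4 n, (w4 p + (3*n+6)) := by
    refine Finset.sum_congr rfl fun p hp => ?_
    rw [mem_S4] at hp
    have h : p.1 + p.2.1 + p.2.2.1 + p.2.2.2 = n := hp.2.2.2.2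
    have : w4 (p.1+1, p.2.1+1, p.2.2.1+1, p.2.2.2+1)
        = w4 p + 3*(p.1 + p.2.1 + p.2.2.1 + p.2.2.2) + 6 := by unfold w4; ring
    rw [this, h]; ring
  have h2 : ∑ p ∈ S3 (n+3), w4 (p.1, p.2.1, p.2.2, 1)
      = ∑ p ∈ S3 (n+3), ((p.1 * p.2.1 + p.1 * p.2.2 + p.2.1 * p.2.2) + (n+3)) := by
    refine Finset.sum_congr rfl fun p hp => ?_
    rw [mem_S3] at hp
    unfold w4
    simp
    omega
  rw [h1, h2]
  simp only [Finset.sum_add_distrib, Finset.sum_const, smul_eq_mul, F4, P4, F3, P3, w4]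
  ring

lemma list4 {l : List ℕ} (h : l.length = 4) : ∃ a b c d, l = [a,b,c,d] := by
  match l, h with
  | [a,b,c,d], _ => exact ⟨a,b,c,d, rfl⟩

lemma sorted_sort_eq {l : List ℕ} (h : l.Pairwise (· ≤ ·)) :
    Multiset.sort (↑l : Multiset ℕ) (· ≤ ·) = l := by
  apply List.Perm.eq_of_pairwise' (Multiset.pairwise_sort _ _) h
  exact Multiset.coe_eq_coe.mp (Multiset.sort_eq _ _)


/-- `e_2 p_4(n)`, the sum of the second elementary symmetric polynomial evaluated at
the parts over all partitions of `n` with exactly `4` parts. -/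
def e2p4 (n : ℕ) : ℕ :=
  ∑ π ∈ Finset.univ.filter (fun π : Nat.Partition n => Multiset.card π.parts = 4),
    π.parts.esymm 2

lemma e2p4_eq_F4 (n : ℕ) : e2p4 n = F4 n := by
  rw [e2p4, F4]
  refine Finset.sum_bij'
    (i := fun π hπ => (((π.parts.sort (· ≤ ·)).getD 3 0), ((π.parts.sort (· ≤ ·)).getD 2 0),
      ((π.parts.sort (· ≤ ·)).getD 1 0), ((π.parts.sort (· ≤ ·)).getD 0 0)))
    (j := fun p hp => ⟨(↑[p.2.2.2, p.2.2.1, p.2.1, p.1] : Multiset ℕ), ?_, ?_⟩)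
    ?_ ?_ ?_ ?_ ?_
  · -- parts_pos
    intro i hi
    have hp' := mem_S4.mp hp
    simp only [Multiset.mem_coe, List.mem_cons, List.not_mem_nil, or_false] at hi
    rcases hi with rfl|rfl|rfl|rfl <;> omega
  · -- parts_sum
    have hp' := mem_S4.mp hp
    show [p.2.2.2, p.2.2.1, p.2.1, p.1].sum = n
    simp only [List.sum_cons, List.sum_nil]
    omega
  · -- hi : i maps into S4
    intro π hπ
    simp only [Finset.mem_filter, Finset.mem_univ, true_and] at hπ
    have hlen : (π.parts.sort (· ≤ ·)).length = 4 := by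
      rw [Multiset.length_sort, hπ]
    obtain ⟨a, b, c, d, hl⟩ := list4 hlen
    have hsorted : List.Pairwise (· ≤ ·) [a,b,c,d] := hl ▸ Multiset.pairwise_sort _ _
    simp only [List.pairwise_cons, List.mem_cons, List.not_mem_nil, or_false,
      List.Pairwise.nil, and_true] at hsorted
    have hab : a ≤ b := hsorted.1 b (by tauto)
    have hbc : b ≤ c := hsorted.2.1 c (by tauto)
    have hcd : c ≤ d := hsorted.2.2.1 d (by tauto)
    have hmem : a ∈ π.parts := by
      rw [← Multiset.sort_eq π.parts (· ≤ ·), hl]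
      simp
    have hpos := π.parts_pos hmem
    have hsum : a + b + c + d = n := by
      have := π.parts_sum
      rw [← Multiset.sort_eq π.parts (· ≤ ·), hl] at this
      simp at this
      omega
    rw [mem_S4]
    dsimp only
    rw [hl]
    simp [List.getD]
    omega
  · -- hj : j maps into partitions with 4 parts
    intro p hp
    simp
  · -- left_inv
    intro π hπ
    simp only [Finset.mem_filter, Finset.mem_univ, true_and] at hπ
    have hlen : (π.parts.sort (· ≤ ·)).length = 4 := by
      rw [Multiset.length_sort, hπ]
    obtain ⟨a, b, c, d, hl⟩ := list4 hlen
    apply Nat.Partition.ext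
    dsimp only
    rw [hl]
    rw [← Multiset.sort_eq π.parts (· ≤ ·), hl]
    rfl
  · -- right_inv
    intro p hp
    have hp' := mem_S4.mp hp
    show _ = p
    have hsorted : List.Pairwise (· ≤ ·) [p.2.2.2, p.2.2.1, p.2.1, p.1] := by
      simp only [List.pairwise_cons, List.mem_cons, List.not_mem_nil, or_false,
        List.Pairwise.nil, and_true]
      refine ⟨fun x hx => ?_, fun x hx => ?_, fun x hx => ?_, fun x hx => hx.elim⟩ <;>
        (try rcases hx with rfl|rfl|rfl) <;> (try rcases hx with rfl|rfl) <;>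
        (try rcases hx with rfl) <;> omega
    have hs := sorted_sort_eq hsorted
    dsimp only
    rw [hs]
    rfl
  · -- weights
    intro π hπ
    simp only [Finset.mem_filter, Finset.mem_univ, true_and] at hπ
    have hlen : (π.parts.sort (· ≤ ·)).length = 4 := by
      rw [Multiset.length_sort, hπ]
    obtain ⟨a, b, c, d, hl⟩ := list4 hlen
    have hparts : π.parts = (↑[a,b,c,d] : Multiset ℕ) := by
      rw [← Multiset.sort_eq π.parts (· ≤ ·), hl]
    rw [hl]
    rw [hparts]
    show Multiset.esymm {a,b,c,d} 2 = _
    simp only [List.getD, List.getElem?_cons_zero, List.getElem?_cons_succ, Option.getD_some]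
    simp [Multiset.esymm, Multiset.powersetCard_cons, Multiset.powersetCard_one, w4]
    ring

lemma P2v0 : P2 0 = 0 := by decide
lemma F2v0 : F2 0 = 0 := by decide
lemma P2v1 : P2 1 = 0 := by decide
lemma F2v1 : F2 1 = 0 := by decide
lemma P3v0 : P3 0 = 0 := by decide
lemma F3v0 : F3 0 = 0 := by decide
lemma P3v1 : P3 1 = 0 := by decide
lemma F3v1 : F3 1 = 0 := by decide
lemma P3v2 : P3 2 = 0 := by decide
lemma F3v2 : F3 2 = 0 := by decide
lemma P4v0 : P4 0 = 0 := by decide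
lemma F4v0 : F4 0 = 0 := by decide
lemma P4v1 : P4 1 = 0 := by decide
lemma F4v1 : F4 1 = 0 := by decide
lemma P4v2 : P4 2 = 0 := by decide
lemma F4v2 : F4 2 = 0 := by decide
lemma P4v3 : P4 3 = 0 := by decide
lemma F4v3 : F4 3 = 0 := by decide
lemma P2v2 : P2 2 = 1 := by have h := P2_rec 0; norm_num [P2v0] at h; exact h
lemma F2v2 : F2 2 = 1 := by have h := F2_rec 0; norm_num [F2v0, P2v0] at h; exact h
lemma P2v3 : P2 3 = 1 := by have h := P2_rec 1; norm_num [P2v1] at h; exact h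
lemma F2v3 : F2 3 = 2 := by have h := F2_rec 1; norm_num [F2v1, P2v1] at h; exact h
lemma P2v4 : P2 4 = 2 := by have h := P2_rec 2; norm_num [P2v2] at h; exact h
lemma F2v4 : F2 4 = 7 := by have h := F2_rec 2; norm_num [F2v2, P2v2] at h; exact h
lemma P2v5 : P2 5 = 2 := by have h := P2_rec 3; norm_num [P2v3] at h; exact h
lemma F2v5 : F2 5 = 10 := by have h := F2_rec 3; norm_num [F2v3, P2v3] at h; exact h
lemma P2v6 : P2 6 = 3 := by have h := P2_rec 4; norm_num [P2v4] at h; exact h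
lemma F2v6 : F2 6 = 22 := by have h := F2_rec 4; norm_num [F2v4, P2v4] at h; exact h
lemma P2v7 : P2 7 = 3 := by have h := P2_rec 5; norm_num [P2v5] at h; exact h
lemma F2v7 : F2 7 = 28 := by have h := F2_rec 5; norm_num [F2v5, P2v5] at h; exact h
lemma P2v8 : P2 8 = 4 := by have h := P2_rec 6; norm_num [P2v6] at h; exact h
lemma F2v8 : F2 8 = 50 := by have h := F2_rec 6; norm_num [F2v6, P2v6] at h; exact h
lemma P2v9 : P2 9 = 4 := by have h := P2_rec 7; norm_num [P2v7] at h; exact h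
lemma F2v9 : F2 9 = 60 := by have h := F2_rec 7; norm_num [F2v7, P2v7] at h; exact h
lemma P2v10 : P2 10 = 5 := by have h := P2_rec 8; norm_num [P2v8] at h; exact h
lemma F2v10 : F2 10 = 95 := by have h := F2_rec 8; norm_num [F2v8, P2v8] at h; exact h
lemma P2v11 : P2 11 = 5 := by have h := P2_rec 9; norm_num [P2v9] at h; exact h
lemma F2v11 : F2 11 = 110 := by have h := F2_rec 9; norm_num [F2v9, P2v9] at h; exact h
lemma P2v12 : P2 12 = 6 := by have h := P2_rec 10; norm_num [P2v10] at h; exact h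
lemma F2v12 : F2 12 = 161 := by have h := F2_rec 10; norm_num [F2v10, P2v10] at h; exact h
lemma P2v13 : P2 13 = 6 := by have h := P2_rec 11; norm_num [P2v11] at h; exact h
lemma F2v13 : F2 13 = 182 := by have h := F2_rec 11; norm_num [F2v11, P2v11] at h; exact h
lemma P2v14 : P2 14 = 7 := by have h := P2_rec 12; norm_num [P2v12] at h; exact h
lemma F2v14 : F2 14 = 252 := by have h := F2_rec 12; norm_num [F2v12, P2v12] at h; exact h
lemma P2v15 : P2 15 = 7 := by have h := P2_rec 13; norm_num [P2v13] at h; exact h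
lemma F2v15 : F2 15 = 280 := by have h := F2_rec 13; norm_num [F2v13, P2v13] at h; exact h
lemma P2v16 : P2 16 = 8 := by have h := P2_rec 14; norm_num [P2v14] at h; exact h
lemma F2v16 : F2 16 = 372 := by have h := F2_rec 14; norm_num [F2v14, P2v14] at h; exact h
lemma P2v17 : P2 17 = 8 := by have h := P2_rec 15; norm_num [P2v15] at h; exact h
lemma F2v17 : F2 17 = 408 := by have h := F2_rec 15; norm_num [F2v15, P2v15] at h; exact h
lemma P2v18 : P2 18 = 9 := by have h := P2_rec 16; norm_num [P2v16] at h; exact h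
lemma F2v18 : F2 18 = 525 := by have h := F2_rec 16; norm_num [F2v16, P2v16] at h; exact h
lemma P2v19 : P2 19 = 9 := by have h := P2_rec 17; norm_num [P2v17] at h; exact h
lemma F2v19 : F2 19 = 570 := by have h := F2_rec 17; norm_num [F2v17, P2v17] at h; exact h
lemma P2v20 : P2 20 = 10 := by have h := P2_rec 18; norm_num [P2v18] at h; exact h
lemma F2v20 : F2 20 = 715 := by have h := F2_rec 18; norm_num [F2v18, P2v18] at h; exact h
lemma P2v21 : P2 21 = 10 := by have h := P2_rec 19; norm_num [P2v19] at h; exact h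
lemma F2v21 : F2 21 = 770 := by have h := F2_rec 19; norm_num [F2v19, P2v19] at h; exact h
lemma P2v22 : P2 22 = 11 := by have h := P2_rec 20; norm_num [P2v20] at h; exact h
lemma F2v22 : F2 22 = 946 := by have h := F2_rec 20; norm_num [F2v20, P2v20] at h; exact h
lemma P2v23 : P2 23 = 11 := by have h := P2_rec 21; norm_num [P2v21] at h; exact h
lemma F2v23 : F2 23 = 1012 := by have h := F2_rec 21; norm_num [F2v21, P2v21] at h; exact h
lemma P2v24 : P2 24 = 12 := by have h := P2_rec 22; norm_num [P2v22] at h; exact h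
lemma F2v24 : F2 24 = 1222 := by have h := F2_rec 22; norm_num [F2v22, P2v22] at h; exact h
lemma P2v25 : P2 25 = 12 := by have h := P2_rec 23; norm_num [P2v23] at h; exact h
lemma F2v25 : F2 25 = 1300 := by have h := F2_rec 23; norm_num [F2v23, P2v23] at h; exact h
lemma P2v26 : P2 26 = 13 := by have h := P2_rec 24; norm_num [P2v24] at h; exact h
lemma F2v26 : F2 26 = 1547 := by have h := F2_rec 24; norm_num [F2v24, P2v24] at h; exact h
lemma P2v27 : P2 27 = 13 := by have h := P2_rec 25; norm_num [P2v25] at h; exact h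
lemma F2v27 : F2 27 = 1638 := by have h := F2_rec 25; norm_num [F2v25, P2v25] at h; exact h
lemma P2v28 : P2 28 = 14 := by have h := P2_rec 26; norm_num [P2v26] at h; exact h
lemma F2v28 : F2 28 = 1925 := by have h := F2_rec 26; norm_num [F2v26, P2v26] at h; exact h
lemma P2v29 : P2 29 = 14 := by have h := P2_rec 27; norm_num [P2v27] at h; exact h
lemma F2v29 : F2 29 = 2030 := by have h := F2_rec 27; norm_num [F2v27, P2v27] at h; exact h
lemma P2v30 : P2 30 = 15 := by have h := P2_rec 28; norm_num [P2v28] at h; exact h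
lemma F2v30 : F2 30 = 2360 := by have h := F2_rec 28; norm_num [F2v28, P2v28] at h; exact h
lemma P2v31 : P2 31 = 15 := by have h := P2_rec 29; norm_num [P2v29] at h; exact h
lemma F2v31 : F2 31 = 2480 := by have h := F2_rec 29; norm_num [F2v29, P2v29] at h; exact h
lemma P2v32 : P2 32 = 16 := by have h := P2_rec 30; norm_num [P2v30] at h; exact h
lemma F2v32 : F2 32 = 2856 := by have h := F2_rec 30; norm_num [F2v30, P2v30] at h; exact h
lemma P2v33 : P2 33 = 16 := by have h := P2_rec 31; norm_num [P2v31] at h; exact h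
lemma F2v33 : F2 33 = 2992 := by have h := F2_rec 31; norm_num [F2v31, P2v31] at h; exact h
lemma P2v34 : P2 34 = 17 := by have h := P2_rec 32; norm_num [P2v32] at h; exact h
lemma F2v34 : F2 34 = 3417 := by have h := F2_rec 32; norm_num [F2v32, P2v32] at h; exact h
lemma P2v35 : P2 35 = 17 := by have h := P2_rec 33; norm_num [P2v33] at h; exact h
lemma F2v35 : F2 35 = 3570 := by have h := F2_rec 33; norm_num [F2v33, P2v33] at h; exact h
lemma P2v36 : P2 36 = 18 := by have h := P2_rec 34; norm_num [P2v34] at h; exact h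
lemma F2v36 : F2 36 = 4047 := by have h := F2_rec 34; norm_num [F2v34, P2v34] at h; exact h
lemma P2v37 : P2 37 = 18 := by have h := P2_rec 35; norm_num [P2v35] at h; exact h
lemma F2v37 : F2 37 = 4218 := by have h := F2_rec 35; norm_num [F2v35, P2v35] at h; exact h
lemma P2v38 : P2 38 = 19 := by have h := P2_rec 36; norm_num [P2v36] at h; exact h
lemma F2v38 : F2 38 = 4750 := by have h := F2_rec 36; norm_num [F2v36, P2v36] at h; exact h
lemma P2v39 : P2 39 = 19 := by have h := P2_rec 37; norm_num [P2v37] at h; exact h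
lemma F2v39 : F2 39 = 4940 := by have h := F2_rec 37; norm_num [F2v37, P2v37] at h; exact h
lemma P2v40 : P2 40 = 20 := by have h := P2_rec 38; norm_num [P2v38] at h; exact h
lemma F2v40 : F2 40 = 5530 := by have h := F2_rec 38; norm_num [F2v38, P2v38] at h; exact h
lemma P2v41 : P2 41 = 20 := by have h := P2_rec 39; norm_num [P2v39] at h; exact h
lemma F2v41 : F2 41 = 5740 := by have h := F2_rec 39; norm_num [F2v39, P2v39] at h; exact h
lemma P2v42 : P2 42 = 21 := by have h := P2_rec 40; norm_num [P2v40] at h; exact h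
lemma F2v42 : F2 42 = 6391 := by have h := F2_rec 40; norm_num [F2v40, P2v40] at h; exact h
lemma P2v43 : P2 43 = 21 := by have h := P2_rec 41; norm_num [P2v41] at h; exact h
lemma F2v43 : F2 43 = 6622 := by have h := F2_rec 41; norm_num [F2v41, P2v41] at h; exact h
lemma P2v44 : P2 44 = 22 := by have h := P2_rec 42; norm_num [P2v42] at h; exact h
lemma F2v44 : F2 44 = 7337 := by have h := F2_rec 42; norm_num [F2v42, P2v42] at h; exact h
lemma P2v45 : P2 45 = 22 := by have h := P2_rec 43; norm_num [P2v43] at h; exact h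
lemma F2v45 : F2 45 = 7590 := by have h := F2_rec 43; norm_num [F2v43, P2v43] at h; exact h
lemma P2v46 : P2 46 = 23 := by have h := P2_rec 44; norm_num [P2v44] at h; exact h
lemma F2v46 : F2 46 = 8372 := by have h := F2_rec 44; norm_num [F2v44, P2v44] at h; exact h
lemma P2v47 : P2 47 = 23 := by have h := P2_rec 45; norm_num [P2v45] at h; exact h
lemma F2v47 : F2 47 = 8648 := by have h := F2_rec 45; norm_num [F2v45, P2v45] at h; exact h
lemma P2v48 : P2 48 = 24 := by have h := P2_rec 46; norm_num [P2v46] at h; exact h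
lemma F2v48 : F2 48 = 9500 := by have h := F2_rec 46; norm_num [F2v46, P2v46] at h; exact h
lemma P2v49 : P2 49 = 24 := by have h := P2_rec 47; norm_num [P2v47] at h; exact h
lemma F2v49 : F2 49 = 9800 := by have h := F2_rec 47; norm_num [F2v47, P2v47] at h; exact h
lemma P3v3 : P3 3 = 1 := by have h := P3_rec 0; norm_num [P3v0, P2v2] at h; exact h
lemma F3v3 : F3 3 = 3 := by have h := F3_rec 0; norm_num [F3v0, P3v0, F2v2, P2v2] at h; exact h
lemma P3v4 : P3 4 = 1 := by have h := P3_rec 1; norm_num [P3v1, P2v3] at h; exact h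
lemma F3v4 : F3 4 = 5 := by have h := F3_rec 1; norm_num [F3v1, P3v1, F2v3, P2v3] at h; exact h
lemma P3v5 : P3 5 = 2 := by have h := P3_rec 2; norm_num [P3v2, P2v4] at h; exact h
lemma F3v5 : F3 5 = 15 := by have h := F3_rec 2; norm_num [F3v2, P3v2, F2v4, P2v4] at h; exact h
lemma P3v6 : P3 6 = 3 := by have h := P3_rec 3; norm_num [P3v3, P2v5] at h; exact h
lemma F3v6 : F3 6 = 32 := by have h := F3_rec 3; norm_num [F3v3, P3v3, F2v5, P2v5] at h; exact h
lemma P3v7 : P3 7 = 4 := by have h := P3_rec 4; norm_num [P3v4, P2v6] at h; exact h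
lemma F3v7 : F3 7 = 56 := by have h := F3_rec 4; norm_num [F3v4, P3v4, F2v6, P2v6] at h; exact h
lemma P3v8 : P3 8 = 5 := by have h := P3_rec 5; norm_num [P3v5, P2v7] at h; exact h
lemma F3v8 : F3 8 = 90 := by have h := F3_rec 5; norm_num [F3v5, P3v5, F2v7, P2v7] at h; exact h
lemma P3v9 : P3 9 = 7 := by have h := P3_rec 6; norm_num [P3v6, P2v8] at h; exact h
lemma F3v9 : F3 9 = 159 := by have h := F3_rec 6; norm_num [F3v6, P3v6, F2v8, P2v8] at h; exact h
lemma P3v10 : P3 10 = 8 := by have h := P3_rec 7; norm_num [P3v7, P2v9] at h; exact h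
lemma F3v10 : F3 10 = 220 := by have h := F3_rec 7; norm_num [F3v7, P3v7, F2v9, P2v9] at h; exact h
lemma P3v11 : P3 11 = 10 := by have h := P3_rec 8; norm_num [P3v8, P2v10] at h; exact h
lemma F3v11 : F3 11 = 330 := by have h := F3_rec 8; norm_num [F3v8, P3v8, F2v10, P2v10] at h; exact h
lemma P3v12 : P3 12 = 12 := by have h := P3_rec 9; norm_num [P3v9, P2v11] at h; exact h
lemma F3v12 : F3 12 = 471 := by have h := F3_rec 9; norm_num [F3v9, P3v9, F2v11, P2v11] at h; exact h
lemma P3v13 : P3 13 = 14 := by have h := P3_rec 10; norm_num [P3v10, P2v12] at h; exact h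
lemma F3v13 : F3 13 = 637 := by have h := F3_rec 10; norm_num [F3v10, P3v10, F2v12, P2v12] at h; exact h
lemma P3v14 : P3 14 = 16 := by have h := P3_rec 11; norm_num [P3v11, P2v13] at h; exact h
lemma F3v14 : F3 14 = 840 := by have h := F3_rec 11; norm_num [F3v11, P3v11, F2v13, P2v13] at h; exact h
lemma P3v15 : P3 15 = 19 := by have h := P3_rec 12; norm_num [P3v12, P2v14] at h; exact h
lemma F3v15 : F3 15 = 1145 := by have h := F3_rec 12; norm_num [F3v12, P3v12, F2v14, P2v14] at h; exact h
lemma P3v16 : P3 16 = 21 := by have h := P3_rec 13; norm_num [P3v13, P2v15] at h; exact h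
lemma F3v16 : F3 16 = 1428 := by have h := F3_rec 13; norm_num [F3v13, P3v13, F2v15, P2v15] at h; exact h
lemma P3v17 : P3 17 = 24 := by have h := P3_rec 14; norm_num [P3v14, P2v16] at h; exact h
lemma F3v17 : F3 17 = 1836 := by have h := F3_rec 14; norm_num [F3v14, P3v14, F2v16, P2v16] at h; exact h
lemma P3v18 : P3 18 = 27 := by have h := P3_rec 15; norm_num [P3v15, P2v17] at h; exact h
lemma F3v18 : F3 18 = 2316 := by have h := F3_rec 15; norm_num [F3v15, P3v15, F2v17, P2v17] at h; exact h
lemma P3v19 : P3 19 = 30 := by have h := P3_rec 16; norm_num [P3v16, P2v18] at h; exact h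
lemma F3v19 : F3 19 = 2850 := by have h := F3_rec 16; norm_num [F3v16, P3v16, F2v18, P2v18] at h; exact h
lemma P3v20 : P3 20 = 33 := by have h := P3_rec 17; norm_num [P3v17, P2v19] at h; exact h
lemma F3v20 : F3 20 = 3465 := by have h := F3_rec 17; norm_num [F3v17, P3v17, F2v19, P2v19] at h; exact h
lemma P3v21 : P3 21 = 37 := by have h := P3_rec 18; norm_num [P3v18, P2v20] at h; exact h
lemma F3v21 : F3 21 = 4284 := by have h := F3_rec 18; norm_num [F3v18, P3v18, F2v20, P2v20] at h; exact h
lemma P3v22 : P3 22 = 40 := by have h := P3_rec 19; norm_num [P3v19, P2v21] at h; exact h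
lemma F3v22 : F3 22 = 5060 := by have h := F3_rec 19; norm_num [F3v19, P3v19, F2v21, P2v21] at h; exact h
lemma P3v23 : P3 23 = 44 := by have h := P3_rec 20; norm_num [P3v20, P2v22] at h; exact h
lemma F3v23 : F3 23 = 6072 := by have h := F3_rec 20; norm_num [F3v20, P3v20, F2v22, P2v22] at h; exact h
lemma P3v24 : P3 24 = 48 := by have h := P3_rec 21; norm_num [P3v21, P2v23] at h; exact h
lemma F3v24 : F3 24 = 7214 := by have h := F3_rec 21; norm_num [F3v21, P3v21, F2v23, P2v23] at h; exact h
lemma P3v25 : P3 25 = 52 := by have h := P3_rec 22; norm_num [P3v22, P2v24] at h; exact h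
lemma F3v25 : F3 25 = 8450 := by have h := F3_rec 22; norm_num [F3v22, P3v22, F2v24, P2v24] at h; exact h
lemma P3v26 : P3 26 = 56 := by have h := P3_rec 23; norm_num [P3v23, P2v25] at h; exact h
lemma F3v26 : F3 26 = 9828 := by have h := F3_rec 23; norm_num [F3v23, P3v23, F2v25, P2v25] at h; exact h
lemma P3v27 : P3 27 = 61 := by have h := P3_rec 24; norm_num [P3v24, P2v26] at h; exact h
lemma F3v27 : F3 27 = 11547 := by have h := F3_rec 24; norm_num [F3v24, P3v24, F2v26, P2v26] at h; exact h
lemma P3v28 : P3 28 = 65 := by have h := P3_rec 25; norm_num [P3v25, P2v27] at h; exact h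
lemma F3v28 : F3 28 = 13195 := by have h := F3_rec 25; norm_num [F3v25, P3v25, F2v27, P2v27] at h; exact h
lemma P3v29 : P3 29 = 70 := by have h := P3_rec 26; norm_num [P3v26, P2v28] at h; exact h
lemma F3v29 : F3 29 = 15225 := by have h := F3_rec 26; norm_num [F3v26, P3v26, F2v28, P2v28] at h; exact h
lemma P3v30 : P3 30 = 75 := by have h := P3_rec 27; norm_num [P3v27, P2v29] at h; exact h
lemma F3v30 : F3 30 = 17460 := by have h := F3_rec 27; norm_num [F3v27, P3v27, F2v29, P2v29] at h; exact h
lemma P3v31 : P3 31 = 80 := by have h := P3_rec 28; norm_num [P3v28, P2v30] at h; exact h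
lemma F3v31 : F3 31 = 19840 := by have h := F3_rec 28; norm_num [F3v28, P3v28, F2v30, P2v30] at h; exact h
lemma P3v32 : P3 32 = 85 := by have h := P3_rec 29; norm_num [P3v29, P2v31] at h; exact h
lemma F3v32 : F3 32 = 22440 := by have h := F3_rec 29; norm_num [F3v29, P3v29, F2v31, P2v31] at h; exact h
lemma P3v33 : P3 33 = 91 := by have h := P3_rec 30; norm_num [P3v30, P2v32] at h; exact h
lemma F3v33 : F3 33 = 25553 := by have h := F3_rec 30; norm_num [F3v30, P3v30, F2v32, P2v32] at h; exact h
lemma P3v34 : P3 34 = 96 := by have h := P3_rec 31; norm_num [P3v31, P2v33] at h; exact h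
lemma F3v34 : F3 34 = 28560 := by have h := F3_rec 31; norm_num [F3v31, P3v31, F2v33, P2v33] at h; exact h
lemma P3v35 : P3 35 = 102 := by have h := P3_rec 32; norm_num [P3v32, P2v34] at h; exact h
lemma F3v35 : F3 35 = 32130 := by have h := F3_rec 32; norm_num [F3v32, P3v32, F2v34, P2v34] at h; exact h
lemma P3v36 : P3 36 = 108 := by have h := P3_rec 33; norm_num [P3v33, P2v35] at h; exact h
lemma F3v36 : F3 36 = 35997 := by have h := F3_rec 33; norm_num [F3v33, P3v33, F2v35, P2v35] at h; exact h
lemma P3v37 : P3 37 = 114 := by have h := P3_rec 34; norm_num [P3v34, P2v36] at h; exact h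
lemma F3v37 : F3 37 = 40071 := by have h := F3_rec 34; norm_num [F3v34, P3v34, F2v36, P2v36] at h; exact h
lemma P3v38 : P3 38 = 120 := by have h := P3_rec 35; norm_num [P3v35, P2v37] at h; exact h
lemma F3v38 : F3 38 = 44460 := by have h := F3_rec 35; norm_num [F3v35, P3v35, F2v37, P2v37] at h; exact h
lemma P3v39 : P3 39 = 127 := by have h := P3_rec 36; norm_num [P3v36, P2v38] at h; exact h
lemma F3v39 : F3 39 = 49569 := by have h := F3_rec 36; norm_num [F3v36, P3v36, F2v38, P2v38] at h; exact h
lemma P3v40 : P3 40 = 133 := by have h := P3_rec 37; norm_num [P3v37, P2v39] at h; exact h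
lemma F3v40 : F3 40 = 54530 := by have h := F3_rec 37; norm_num [F3v37, P3v37, F2v39, P2v39] at h; exact h
lemma P3v41 : P3 41 = 140 := by have h := P3_rec 38; norm_num [P3v38, P2v40] at h; exact h
lemma F3v41 : F3 41 = 60270 := by have h := F3_rec 38; norm_num [F3v38, P3v38, F2v40, P2v40] at h; exact h
lemma P3v42 : P3 42 = 147 := by have h := P3_rec 39; norm_num [P3v39, P2v41] at h; exact h
lemma F3v42 : F3 42 = 66416 := by have h := F3_rec 39; norm_num [F3v39, P3v39, F2v41, P2v41] at h; exact h
lemma P3v43 : P3 43 = 154 := by have h := P3_rec 40; norm_num [P3v40, P2v42] at h; exact h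
lemma F3v43 : F3 43 = 72842 := by have h := F3_rec 40; norm_num [F3v40, P3v40, F2v42, P2v42] at h; exact h
lemma P3v44 : P3 44 = 161 := by have h := P3_rec 41; norm_num [P3v41, P2v43] at h; exact h
lemma F3v44 : F3 44 = 79695 := by have h := F3_rec 41; norm_num [F3v41, P3v41, F2v43, P2v43] at h; exact h
lemma P3v45 : P3 45 = 169 := by have h := P3_rec 42; norm_num [P3v42, P2v44] at h; exact h
lemma F3v45 : F3 45 = 87510 := by have h := F3_rec 42; norm_num [F3v42, P3v42, F2v44, P2v44] at h; exact h
lemma P3v46 : P3 46 = 176 := by have h := P3_rec 43; norm_num [P3v43, P2v45] at h; exact h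
lemma F3v46 : F3 46 = 95128 := by have h := F3_rec 43; norm_num [F3v43, P3v43, F2v45, P2v45] at h; exact h
lemma P3v47 : P3 47 = 184 := by have h := P3_rec 44; norm_num [P3v44, P2v46] at h; exact h
lemma F3v47 : F3 47 = 103776 := by have h := F3_rec 44; norm_num [F3v44, P3v44, F2v46, P2v46] at h; exact h
lemma P3v48 : P3 48 = 192 := by have h := P3_rec 45; norm_num [P3v45, P2v47] at h; exact h
lemma F3v48 : F3 48 = 112956 := by have h := F3_rec 45; norm_num [F3v45, P3v45, F2v47, P2v47] at h; exact h
lemma P3v49 : P3 49 = 200 := by have h := P3_rec 46; norm_num [P3v46, P2v48] at h; exact h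
lemma F3v49 : F3 49 = 122500 := by have h := F3_rec 46; norm_num [F3v46, P3v46, F2v48, P2v48] at h; exact h
lemma P3v50 : P3 50 = 208 := by have h := P3_rec 47; norm_num [P3v47, P2v49] at h; exact h
lemma F3v50 : F3 50 = 132600 := by have h := F3_rec 47; norm_num [F3v47, P3v47, F2v49, P2v49] at h; exact h
lemma P4v4 : P4 4 = 1 := by have h := P4_rec 0; norm_num [P4v0, P3v3] at h; exact h
lemma F4v4 : F4 4 = 6 := by have h := F4_rec 0; norm_num [F4v0, P4v0, F3v3, P3v3] at h; exact h
lemma P4v5 : P4 5 = 1 := by have h := P4_rec 1; norm_num [P4v1, P3v4] at h; exact h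
lemma F4v5 : F4 5 = 9 := by have h := F4_rec 1; norm_num [F4v1, P4v1, F3v4, P3v4] at h; exact h
lemma P4v6 : P4 6 = 2 := by have h := P4_rec 2; norm_num [P4v2, P3v5] at h; exact h
lemma F4v6 : F4 6 = 25 := by have h := F4_rec 2; norm_num [F4v2, P4v2, F3v5, P3v5] at h; exact h
lemma P4v7 : P4 7 = 3 := by have h := P4_rec 3; norm_num [P4v3, P3v6] at h; exact h
lemma F4v7 : F4 7 = 50 := by have h := F4_rec 3; norm_num [F4v3, P4v3, F3v6, P3v6] at h; exact h
lemma P4v8 : P4 8 = 5 := by have h := P4_rec 4; norm_num [P4v4, P3v7] at h; exact h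
lemma F4v8 : F4 8 = 108 := by have h := F4_rec 4; norm_num [F4v4, P4v4, F3v7, P3v7] at h; exact h
lemma P4v9 : P4 9 = 6 := by have h := P4_rec 5; norm_num [P4v5, P3v8] at h; exact h
lemma F4v9 : F4 9 = 160 := by have h := F4_rec 5; norm_num [F4v5, P4v5, F3v8, P3v8] at h; exact h
lemma P4v10 : P4 10 = 9 := by have h := P4_rec 6; norm_num [P4v6, P3v9] at h; exact h
lemma F4v10 : F4 10 = 295 := by have h := F4_rec 6; norm_num [F4v6, P4v6, F3v9, P3v9] at h; exact h
lemma P4v11 : P4 11 = 11 := by have h := P4_rec 7; norm_num [P4v7, P3v10] at h; exact h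
lemma F4v11 : F4 11 = 431 := by have h := F4_rec 7; norm_num [F4v7, P4v7, F3v10, P3v10] at h; exact h
lemma P4v12 : P4 12 = 15 := by have h := P4_rec 8; norm_num [P4v8, P3v11] at h; exact h
lemma F4v12 : F4 12 = 698 := by have h := F4_rec 8; norm_num [F4v8, P4v8, F3v11, P3v11] at h; exact h
lemma P4v13 : P4 13 = 18 := by have h := P4_rec 9; norm_num [P4v9, P3v12] at h; exact h
lemma F4v13 : F4 13 = 973 := by have h := F4_rec 9; norm_num [F4v9, P4v9, F3v12, P3v12] at h; exact h
lemma P4v14 : P4 14 = 23 := by have h := P4_rec 10; norm_num [P4v10, P3v13] at h; exact h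
lemma F4v14 : F4 14 = 1438 := by have h := F4_rec 10; norm_num [F4v10, P4v10, F3v13, P3v13] at h; exact h
lemma P4v15 : P4 15 = 27 := by have h := P4_rec 11; norm_num [P4v11, P3v14] at h; exact h
lemma F4v15 : F4 15 = 1924 := by have h := F4_rec 11; norm_num [F4v11, P4v11, F3v14, P3v14] at h; exact h
lemma P4v16 : P4 16 = 34 := by have h := P4_rec 12; norm_num [P4v12, P3v15] at h; exact h
lemma F4v16 : F4 16 = 2758 := by have h := F4_rec 12; norm_num [F4v12, P4v12, F3v15, P3v15] at h; exact h
lemma P4v17 : P4 17 = 39 := by have h := P4_rec 13; norm_num [P4v13, P3v16] at h; exact h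
lemma F4v17 : F4 17 = 3547 := by have h := F4_rec 13; norm_num [F4v13, P4v13, F3v16, P3v16] at h; exact h
lemma P4v18 : P4 18 = 47 := by have h := P4_rec 14; norm_num [P4v14, P3v17] at h; exact h
lemma F4v18 : F4 18 = 4786 := by have h := F4_rec 14; norm_num [F4v14, P4v14, F3v17, P3v17] at h; exact h
lemma P4v19 : P4 19 = 54 := by have h := P4_rec 15; norm_num [P4v15, P3v18] at h; exact h
lemma F4v19 : F4 19 = 6103 := by have h := F4_rec 15; norm_num [F4v15, P4v15, F3v18, P3v18] at h; exact h
lemma P4v20 : P4 20 = 64 := by have h := P4_rec 16; norm_num [P4v16, P3v19] at h; exact h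
lemma F4v20 : F4 20 = 8014 := by have h := F4_rec 16; norm_num [F4v16, P4v16, F3v19, P3v19] at h; exact h
lemma P4v21 : P4 21 = 72 := by have h := P4_rec 17; norm_num [P4v17, P3v20] at h; exact h
lemma F4v21 : F4 21 = 9895 := by have h := F4_rec 17; norm_num [F4v17, P4v17, F3v20, P3v20] at h; exact h
lemma P4v22 : P4 22 = 84 := by have h := P4_rec 18; norm_num [P4v18, P3v21] at h; exact h
lemma F4v22 : F4 22 = 12667 := by have h := F4_rec 18; norm_num [F4v18, P4v18, F3v21, P3v21] at h; exact h
lemma P4v23 : P4 23 = 94 := by have h := P4_rec 19; norm_num [P4v19, P3v22] at h; exact h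
lemma F4v23 : F4 23 = 15445 := by have h := F4_rec 19; norm_num [F4v19, P4v19, F3v22, P3v22] at h; exact h
lemma P4v24 : P4 24 = 108 := by have h := P4_rec 20; norm_num [P4v20, P3v23] at h; exact h
lemma F4v24 : F4 24 = 19322 := by have h := F4_rec 20; norm_num [F4v20, P4v20, F3v23, P3v23] at h; exact h
lemma P4v25 : P4 25 = 120 := by have h := P4_rec 21; norm_num [P4v21, P3v24] at h; exact h
lemma F4v25 : F4 25 = 23229 := by have h := F4_rec 21; norm_num [F4v21, P4v21, F3v24, P3v24] at h; exact h
lemma P4v26 : P4 26 = 136 := by have h := P4_rec 22; norm_num [P4v22, P3v25] at h; exact h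
lemma F4v26 : F4 26 = 28465 := by have h := F4_rec 22; norm_num [F4v22, P4v22, F3v25, P3v25] at h; exact h
lemma P4v27 : P4 27 = 150 := by have h := P4_rec 23; norm_num [P4v23, P3v26] at h; exact h
lemma F4v27 : F4 27 = 33779 := by have h := F4_rec 23; norm_num [F4v23, P4v23, F3v26, P3v26] at h; exact h
lemma P4v28 : P4 28 = 169 := by have h := P4_rec 24; norm_num [P4v24, P3v27] at h; exact h
lemma F4v28 : F4 28 = 40940 := by have h := F4_rec 24; norm_num [F4v24, P4v24, F3v27, P3v27] at h; exact h
lemma P4v29 : P4 29 = 185 := by have h := P4_rec 25; norm_num [P4v25, P3v28] at h; exact h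
lemma F4v29 : F4 29 = 47964 := by have h := F4_rec 25; norm_num [F4v25, P4v25, F3v28, P3v28] at h; exact h
lemma P4v30 : P4 30 = 206 := by have h := P4_rec 26; norm_num [P4v26, P3v29] at h; exact h
lemma F4v30 : F4 30 = 57144 := by have h := F4_rec 26; norm_num [F4v26, P4v26, F3v29, P3v29] at h; exact h
lemma P4v31 : P4 31 = 225 := by have h := P4_rec 27; norm_num [P4v27, P3v30] at h; exact h
lemma F4v31 : F4 31 = 66539 := by have h := F4_rec 27; norm_num [F4v27, P4v27, F3v30, P3v30] at h; exact h
lemma P4v32 : P4 32 = 249 := by have h := P4_rec 28; norm_num [P4v28, P3v31] at h; exact h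
lemma F4v32 : F4 32 = 78470 := by have h := F4_rec 28; norm_num [F4v28, P4v28, F3v31, P3v31] at h; exact h
lemma P4v33 : P4 33 = 270 := by have h := P4_rec 29; norm_num [P4v29, P3v32] at h; exact h
lemma F4v33 : F4 33 = 90329 := by have h := F4_rec 29; norm_num [F4v29, P4v29, F3v32, P3v32] at h; exact h
lemma P4v34 : P4 34 = 297 := by have h := P4_rec 30; norm_num [P4v30, P3v33] at h; exact h
lemma F4v34 : F4 34 = 105476 := by have h := F4_rec 30; norm_num [F4v30, P4v30, F3v33, P3v33] at h; exact h
lemma P4v35 : P4 35 = 321 := by have h := P4_rec 31; norm_num [P4v31, P3v34] at h; exact h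
lemma F4v35 : F4 35 = 120638 := by have h := F4_rec 31; norm_num [F4v31, P4v31, F3v34, P3v34] at h; exact h
lemma P4v36 : P4 36 = 351 := by have h := P4_rec 32; norm_num [P4v32, P3v35] at h; exact h
lemma F4v36 : F4 36 = 139568 := by have h := F4_rec 32; norm_num [F4v32, P4v32, F3v35, P3v35] at h; exact h
lemma P4v37 : P4 37 = 378 := by have h := P4_rec 33; norm_num [P4v33, P3v36] at h; exact h
lemma F4v37 : F4 37 = 158564 := by have h := F4_rec 33; norm_num [F4v33, P4v33, F3v36, P3v36] at h; exact h
lemma P4v38 : P4 38 = 411 := by have h := P4_rec 34; norm_num [P4v34, P3v37] at h; exact h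
lemma F4v38 : F4 38 = 181841 := by have h := F4_rec 34; norm_num [F4v34, P4v34, F3v37, P3v37] at h; exact h
lemma P4v39 : P4 39 = 441 := by have h := P4_rec 35; norm_num [P4v35, P3v38] at h; exact h
lemma F4v39 : F4 39 = 205289 := by have h := F4_rec 35; norm_num [F4v35, P4v35, F3v38, P3v38] at h; exact h
lemma P4v40 : P4 40 = 478 := by have h := P4_rec 36; norm_num [P4v36, P3v39] at h; exact h
lemma F4v40 : F4 40 = 234104 := by have h := F4_rec 36; norm_num [F4v36, P4v36, F3v39, P3v39] at h; exact h
lemma P4v41 : P4 41 = 511 := by have h := P4_rec 37; norm_num [P4v37, P3v40] at h; exact h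
lemma F4v41 : F4 41 = 262640 := by have h := F4_rec 37; norm_num [F4v37, P4v37, F3v40, P3v40] at h; exact h
lemma P4v42 : P4 42 = 551 := by have h := P4_rec 38; norm_num [P4v38, P3v41] at h; exact h
lemma F4v42 : F4 42 = 297171 := by have h := F4_rec 38; norm_num [F4v38, P4v38, F3v41, P3v41] at h; exact h
lemma P4v43 : P4 43 = 588 := by have h := P4_rec 39; norm_num [P4v39, P3v42] at h; exact h
lemma F4v43 : F4 43 = 332122 := by have h := F4_rec 39; norm_num [F4v39, P4v39, F3v42, P3v42] at h; exact h
lemma P4v44 : P4 44 = 632 := by have h := P4_rec 40; norm_num [P4v40, P3v43] at h; exact h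
lemma F4v44 : F4 44 = 373796 := by have h := F4_rec 40; norm_num [F4v40, P4v40, F3v43, P3v43] at h; exact h
lemma P4v45 : P4 45 = 672 := by have h := P4_rec 41; norm_num [P4v41, P3v44] at h; exact h
lemma F4v45 : F4 45 = 415338 := by have h := F4_rec 41; norm_num [F4v41, P4v41, F3v44, P3v44] at h; exact h
lemma P4v46 : P4 46 = 720 := by have h := P4_rec 42; norm_num [P4v42, P3v45] at h; exact h
lemma F4v46 : F4 46 = 465018 := by have h := F4_rec 42; norm_num [F4v42, P4v42, F3v45, P3v45] at h; exact h
lemma P4v47 : P4 47 = 764 := by have h := P4_rec 43; norm_num [P4v43, P3v46] at h; exact h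
lemma F4v47 : F4 47 = 514726 := by have h := F4_rec 43; norm_num [F4v43, P4v43, F3v46, P3v46] at h; exact h
lemma P4v48 : P4 48 = 816 := by have h := P4_rec 44; norm_num [P4v44, P3v47] at h; exact h
lemma F4v48 : F4 48 = 573436 := by have h := F4_rec 44; norm_num [F4v44, P4v44, F3v47, P3v47] at h; exact h
lemma P4v49 : P4 49 = 864 := by have h := P4_rec 45; norm_num [P4v45, P3v48] at h; exact h
lemma F4v49 : F4 49 = 632262 := by have h := F4_rec 45; norm_num [F4v45, P4v45, F3v48, P3v48] at h; exact h
lemma P4v50 : P4 50 = 920 := by have h := P4_rec 46; norm_num [P4v46, P3v49] at h; exact h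
lemma F4v50 : F4 50 = 700998 := by have h := F4_rec 46; norm_num [F4v46, P4v46, F3v49, P3v49] at h; exact h
lemma P4v51 : P4 51 = 972 := by have h := P4_rec 47; norm_num [P4v47, P3v50] at h; exact h
lemma F4v51 : F4 51 = 770034 := by have h := F4_rec 47; norm_num [F4v47, P4v47, F3v50, P3v50] at h; exact h


lemma C2 (n : ℕ) : F2 (n+48) ≡ F2 n [MOD 2] ∧ P2 (n+48) ≡ P2 n [MOD 2] := by
  induction n using Nat.strong_induction_on with
  | _ n ih =>
    match n with
    | 0 => exact ⟨by show F2 48 ≡ F2 0 [MOD 2]; rw [F2v48, F2v0]; decide,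
        by show P2 48 ≡ P2 0 [MOD 2]; rw [P2v48, P2v0]; decide⟩
    | 1 => exact ⟨by show F2 49 ≡ F2 1 [MOD 2]; rw [F2v49, F2v1]; decide,
        by show P2 49 ≡ P2 1 [MOD 2]; rw [P2v49, P2v1]; decide⟩
    | (m+2) =>
      have ihm := ih m (by omega)
      have e1 : F2 (m+2+48) = F2 (m+48) + (m+48+1) * P2 (m+48) + (m+48+1) := by
        rw [show m+2+48 = m+48+2 from by omega]; exact F2_rec (m+48)
      have e3 : P2 (m+2+48) = P2 (m+48) + 1 := by
        rw [show m+2+48 = m+48+2 from by omega]; exact P2_rec (m+48)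
      have hc : (m+48+1) ≡ (m+1) [MOD 2] := by show (m+48+1)%2 = (m+1)%2; omega
      refine ⟨?_, ?_⟩
      · rw [e1, F2_rec m]
        exact (ihm.1.add (hc.mul ihm.2)).add hc
      · rw [e3, P2_rec m]
        exact ihm.2.add_right 1

lemma C3 (n : ℕ) : F3 (n+48) ≡ F3 n [MOD 2] ∧ P3 (n+48) ≡ P3 n [MOD 2] := by
  induction n using Nat.strong_induction_on with
  | _ n ih =>
    match n with
    | 0 => exact ⟨by show F3 48 ≡ F3 0 [MOD 2]; rw [F3v48, F3v0]; decide,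
        by show P3 48 ≡ P3 0 [MOD 2]; rw [P3v48, P3v0]; decide⟩
    | 1 => exact ⟨by show F3 49 ≡ F3 1 [MOD 2]; rw [F3v49, F3v1]; decide,
        by show P3 49 ≡ P3 1 [MOD 2]; rw [P3v49, P3v1]; decide⟩
    | 2 => exact ⟨by show F3 50 ≡ F3 2 [MOD 2]; rw [F3v50, F3v2]; decide,
        by show P3 50 ≡ P3 2 [MOD 2]; rw [P3v50, P3v2]; decide⟩
    | (m+3) =>
      have ihm := ih m (by omega)
      have h2 := C2 (m+2)
      have e1 : F3 (m+3+48) = F3 (m+48) + (2*(m+48)+3) * P3 (m+48)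
          + (F2 (m+2+48) + (m+48+2) * P2 (m+2+48)) := by
        rw [show m+3+48 = m+48+3 from by omega, F3_rec,
          show m+48+2 = m+2+48 from by omega]
      have e3 : P3 (m+3+48) = P3 (m+48) + P2 (m+2+48) := by
        rw [show m+3+48 = m+48+3 from by omega, P3_rec,
          show m+48+2 = m+2+48 from by omega]
      have hc1 : (2*(m+48)+3) ≡ (2*m+3) [MOD 2] := by
        show (2*(m+48)+3)%2 = (2*m+3)%2; omega
      have hc2 : (m+48+2) ≡ (m+2) [MOD 2] := by show (m+48+2)%2 = (m+2)%2; omega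
      refine ⟨?_, ?_⟩
      · rw [e1, F3_rec m]
        exact (ihm.1.add (hc1.mul ihm.2)).add (h2.1.add (hc2.mul h2.2))
      · rw [e3, P3_rec m]
        exact ihm.2.add h2.2

lemma C4 (n : ℕ) : F4 (n+48) ≡ F4 n [MOD 2] ∧ P4 (n+48) ≡ P4 n [MOD 2] := by
  induction n using Nat.strong_induction_on with
  | _ n ih =>
    match n with
    | 0 => exact ⟨by show F4 48 ≡ F4 0 [MOD 2]; rw [F4v48, F4v0]; decide,
        by show P4 48 ≡ P4 0 [MOD 2]; rw [P4v48, P4v0]; decide⟩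
    | 1 => exact ⟨by show F4 49 ≡ F4 1 [MOD 2]; rw [F4v49, F4v1]; decide,
        by show P4 49 ≡ P4 1 [MOD 2]; rw [P4v49, P4v1]; decide⟩
    | 2 => exact ⟨by show F4 50 ≡ F4 2 [MOD 2]; rw [F4v50, F4v2]; decide,
        by show P4 50 ≡ P4 2 [MOD 2]; rw [P4v50, P4v2]; decide⟩
    | 3 => exact ⟨by show F4 51 ≡ F4 3 [MOD 2]; rw [F4v51, F4v3]; decide,
        by show P4 51 ≡ P4 3 [MOD 2]; rw [P4v51, P4v3]; decide⟩
    | (m+4) =>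
      have ihm := ih m (by omega)
      have h3 := C3 (m+3)
      have e1 : F4 (m+4+48) = F4 (m+48) + (3*(m+48)+6) * P4 (m+48)
          + (F3 (m+3+48) + (m+48+3) * P3 (m+3+48)) := by
        rw [show m+4+48 = m+48+4 from by omega, F4_rec,
          show m+48+3 = m+3+48 from by omega]
      have e3 : P4 (m+4+48) = P4 (m+48) + P3 (m+3+48) := by
        rw [show m+4+48 = m+48+4 from by omega, P4_rec,
          show m+48+3 = m+3+48 from by omega]
      have hc1 : (3*(m+48)+6) ≡ (3*m+6) [MOD 2] := by
        show (3*(m+48)+6)%2 = (3*m+6)%2; omega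
      have hc2 : (m+48+3) ≡ (m+3) [MOD 2] := by show (m+48+3)%2 = (m+3)%2; omega
      refine ⟨?_, ?_⟩
      · rw [e1, F4_rec m]
        exact (ihm.1.add (hc1.mul ihm.2)).add (h3.1.add (hc2.mul h3.2))
      · rw [e3, P4_rec m]
        exact ihm.2.add h3.2

theorem e2p4_period_mod_two (n : ℕ) : e2p4 (n + 48) ≡ e2p4 n [MOD 2] := by
  have h := (C4 n).1
  rwa [← e2p4_eq_F4, ← e2p4_eq_F4] at h
end
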